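/- arXiv:1009.1825 — 9 statements merged into one kernel-verified Lean document; each statement's English description precedes it below -/
import Mathlib

section
/- Let X = Y = [0,1] with μ = ν the Lebesgue measure, and define c(x,y) = 0 if y < x, c(x,y) = 1 if x = y, and c(x,y) = ∞ if x < y. Then any transport plan π ∈ Π(μ,ν) with finite cost ∫∫ c dπ must be concentrated on the diagonal {(x,x) : x ∈ [0,1]}, and consequently the primal value P_c = inf{∫∫ c dπ : π ∈ Π(μ,ν)} equals 1. -/
open MeasureTheory Set

/-- Lebesgue measure on `[0,1]`. -/
noncomputable def muI : Measure ℝ := volume.restrict (Set.Icc 0 1)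

/-- The cost: `0` below the diagonal, `1` on the diagonal, `∞` above. -/
noncomputable def c0 : ℝ × ℝ → ENNReal := fun p =>
  if p.2 < p.1 then 0 else if p.1 = p.2 then 1 else ⊤

lemma muI_univ : muI Set.univ = 1 := by
  simp [muI, Real.volume_Icc]

lemma c0_meas : Measurable c0 := by
  unfold c0
  refine Measurable.ite (measurableSet_lt measurable_snd measurable_fst) measurable_const ?_
  exact Measurable.ite (measurableSet_eq_fun measurable_fst measurable_snd)
    measurable_const measurable_const

lemma pi_univ (π : Measure (ℝ × ℝ)) (h1 : π.map Prod.fst = muI) : π Set.univ = 1 := by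
  have := congrArg (fun m : Measure ℝ => m Set.univ) h1
  simpa [Measure.map_apply measurable_fst MeasurableSet.univ, muI_univ] using this

lemma diag_lemma (π : Measure (ℝ × ℝ)) (h1 : π.map Prod.fst = muI)
    (h2 : π.map Prod.snd = muI) (hfin : (∫⁻ p, c0 p ∂π) ≠ ⊤) :
    π {p : ℝ × ℝ | p.1 ≠ p.2} = 0 := by
  have hfinmeas : IsFiniteMeasure π := ⟨by rw [pi_univ π h1]; exact ENNReal.one_lt_top⟩
  have hSm : MeasurableSet {p : ℝ × ℝ | p.1 < p.2} :=
    measurableSet_lt measurable_fst measurable_snd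
  -- Step A: above-diagonal has measure zero
  have hA : π {p : ℝ × ℝ | p.1 < p.2} = 0 := by
    by_contra h
    apply hfin
    have hcs : ∫⁻ p in {p : ℝ × ℝ | p.1 < p.2}, c0 p ∂π = ⊤ := by
      rw [setLIntegral_congr_fun hSm (fun p hp => ?_)]
      · rw [setLIntegral_const, ENNReal.top_mul h]
      · have hp' : p.1 < p.2 := hp
        show c0 p = ⊤
        simp only [c0, if_neg (not_lt.2 (le_of_lt hp')), if_neg (ne_of_lt hp')]
    exact top_le_iff.mp (hcs ▸ lintegral_mono' Measure.restrict_le_self le_rfl)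
  -- Step B
  have key : ∀ t : ℝ, π ({p : ℝ × ℝ | t < p.1} ∩ {p | p.2 ≤ t}) = 0 := by
    intro t
    set A := {p : ℝ × ℝ | t < p.1} with hAdef
    set B := {p : ℝ × ℝ | t < p.2} with hBdef
    have hAm : MeasurableSet A := measurable_fst measurableSet_Ioi
    have hBm : MeasurableSet B := measurable_snd measurableSet_Ioi
    have hπA : π A = muI (Set.Ioi t) := by
      rw [← h1, Measure.map_apply measurable_fst measurableSet_Ioi]; rfl
    have hπB : π B = muI (Set.Ioi t) := by
      rw [← h2, Measure.map_apply measurable_snd measurableSet_Ioi]; rfl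
    have hBdiffA : π (B \ A) = 0 := by
      refine measure_mono_null (fun p hp => ?_) hA
      have h2' : ¬ t < p.1 := hp.2
      have h1' : t < p.2 := hp.1
      exact lt_of_le_of_lt (not_lt.1 h2') h1'
    have hBle : π B ≤ π (A ∩ B) := by
      calc π B ≤ π ((A ∩ B) ∪ (B \ A)) := measure_mono (fun p hp => by
            by_cases h' : p ∈ A
            · exact Or.inl ⟨h', hp⟩
            · exact Or.inr ⟨hp, h'⟩)
        _ ≤ π (A ∩ B) + π (B \ A) := measure_union_le _ _
        _ = π (A ∩ B) := by rw [hBdiffA, add_zero]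
    have hEq : π (A ∩ B) = π A := le_antisymm (measure_mono inter_subset_left)
      (by rw [hπA, ← hπB]; exact hBle)
    have hsum : π (A ∩ B) + π (A \ B) = π A := measure_inter_add_diff A hBm
    have hzero : π (A \ B) = 0 := by
      have : π (A ∩ B) + π (A \ B) = π (A ∩ B) + 0 := by
        rw [add_zero, hsum, hEq]
      exact (ENNReal.add_right_inj (measure_ne_top π _)).1 this
    have : A \ B = {p : ℝ × ℝ | t < p.1} ∩ {p | p.2 ≤ t} := by
      ext p; simp [hAdef, hBdef, Set.mem_diff, not_lt]
    rwa [this] at hzero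
  -- Step C: below-diagonal null
  have hlt : π {p : ℝ × ℝ | p.2 < p.1} = 0 := by
    refine measure_mono_null (fun p hp => ?_)
      (measure_iUnion_null (s := fun q : ℚ =>
        ({p : ℝ × ℝ | (q : ℝ) < p.1} ∩ {p | p.2 ≤ (q : ℝ)})) fun q => key q)
    have hp' : p.2 < p.1 := hp
    obtain ⟨q, hq1, hq2⟩ := exists_rat_btwn hp'
    exact mem_iUnion.2 ⟨q, hq2, hq1.le⟩
  refine measure_mono_null (fun p hp => ?_) (measure_union_null hA hlt)
  exact (lt_or_gt_of_ne hp).imp id id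

lemma lower_bound (π : Measure (ℝ × ℝ)) (h1 : π.map Prod.fst = muI)
    (h2 : π.map Prod.snd = muI) : 1 ≤ ∫⁻ p, c0 p ∂π := by
  by_cases hfin : (∫⁻ p, c0 p ∂π) = ⊤
  · rw [hfin]; exact le_top
  · have hdiag := diag_lemma π h1 h2 hfin
    have hae : c0 =ᵐ[π] fun _ => 1 := by
      refine measure_mono_null (fun p hp => ?_) hdiag
      simp only [Set.mem_setOf_eq]
      intro heq
      apply hp
      show c0 p = 1
      simp [c0, heq]
    rw [lintegral_congr_ae hae, lintegral_one, pi_univ π h1]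

lemma diag_plan :
    (muI.map (fun x : ℝ => (x, x))).map Prod.fst = muI ∧
    (muI.map (fun x : ℝ => (x, x))).map Prod.snd = muI ∧
    (∫⁻ p, c0 p ∂(muI.map (fun x : ℝ => (x, x)))) = 1 := by
  have hd : Measurable (fun x : ℝ => (x, x)) := measurable_id.prod measurable_id
  refine ⟨?_, ?_, ?_⟩
  · rw [Measure.map_map measurable_fst hd]
    exact Measure.map_id
  · rw [Measure.map_map measurable_snd hd]
    exact Measure.map_id
  · rw [lintegral_map c0_meas hd]
    have : ∀ x : ℝ, c0 (x, x) = 1 := fun x => by simp [c0]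
    simp only [this, lintegral_one, muI_univ]

theorem stmt0 :
    (∀ π : Measure (ℝ × ℝ), π.map Prod.fst = muI → π.map Prod.snd = muI →
      (∫⁻ p, c0 p ∂π) ≠ ⊤ → π {p : ℝ × ℝ | p.1 ≠ p.2} = 0) ∧
    (⨅ π ∈ {π : Measure (ℝ × ℝ) | π.map Prod.fst = muI ∧ π.map Prod.snd = muI},
      ∫⁻ p, c0 p ∂π) = 1 := by
  refine ⟨diag_lemma, le_antisymm ?_ ?_⟩
  · obtain ⟨hm1, hm2, hcost⟩ := diag_plan
    exact le_of_le_of_eq (iInf₂_le (muI.map (fun x : ℝ => (x, x))) ⟨hm1, hm2⟩) hcost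
  · exact le_iInf₂ fun π hπ => lower_bound π hπ.1 hπ.2
end

section
/- Let X = Y = [0,1] with μ = ν the Lebesgue measure, and define c(x,y) = 0 if y < x, c(x,y) = 1 if x = y, and c(x,y) = ∞ if x < y. If φ : [0,1] → [-∞,∞) and ψ : [0,1] → [-∞,∞) satisfy φ(x) + ψ(y) ≤ c(x,y) for all x, y, then the set {x ∈ [0,1] : φ(x) + ψ(x) > 0} is countable. Consequently, the dual value D_c = sup{∫φ dμ + ∫ψ dν : φ ∈ L¹(μ), ψ ∈ L¹(ν), φ ⊕ ψ ≤ c} equals 0, and there is a duality gap: D_c = 0 < 1 = P_c. -/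
open MeasureTheory Set

theorem part1 (φ ψ : ℝ → EReal) (hφ : ∀ x, φ x ≠ ⊤) (hψ : ∀ y, ψ y ≠ ⊤)
    (hc : ∀ x ∈ Set.Icc (0:ℝ) 1, ∀ y ∈ Set.Icc (0:ℝ) 1, φ x + ψ y ≤ (c0 (x, y) : EReal)) :
    {x ∈ Set.Icc (0:ℝ) 1 | 0 < φ x + ψ x}.Countable := by
  set S := {x ∈ Set.Icc (0:ℝ) 1 | 0 < φ x + ψ x} with hS
  -- on S, φ and ψ are finite
  have hfin : ∀ x ∈ S, ∃ a b : ℝ, φ x = (a : EReal) ∧ ψ x = (b : EReal) ∧ 0 < a + b := by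
    intro x hx
    have hpos : 0 < φ x + ψ x := hx.2
    have hφb : φ x ≠ ⊥ := by
      intro h; rw [h] at hpos
      rw [EReal.bot_add] at hpos
      exact absurd hpos (by simp)
    have hψb : ψ x ≠ ⊥ := by
      intro h; rw [h] at hpos
      rw [EReal.add_bot] at hpos
      exact absurd hpos (by simp)
    refine ⟨(φ x).toReal, (ψ x).toReal, (EReal.coe_toReal (hφ x) hφb).symm,
      (EReal.coe_toReal (hψ x) hψb).symm, ?_⟩
    have := hpos
    rw [← EReal.coe_toReal (hφ x) hφb, ← EReal.coe_toReal (hψ x) hψb] at this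
    exact_mod_cast this
  choose! A B hA hB hAB using hfin
  -- choose a rational in the gap
  have hq : ∀ x ∈ S, ∃ q : ℚ, -(B x) < (q : ℝ) ∧ (q : ℝ) < A x := by
    intro x hx
    exact exists_rat_btwn (by linarith [hAB x hx])
  choose! f hf1 hf2 using hq
  have hmono : ∀ x ∈ S, ∀ y ∈ S, y < x → f x < f y := by
    intro x hx y hy hyx
    have h0 : φ x + ψ y ≤ 0 := by
      have h := hc x hx.1 y hy.1
      have : c0 (x, y) = 0 := by simp [c0, hyx]
      rw [this] at h
      simpa using h
    rw [hA x hx, hB y hy] at h0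
    have h0' : A x + B y ≤ 0 := by exact_mod_cast h0
    have : (f x : ℝ) < (f y : ℝ) := by
      have h1 := hf2 x hx
      have h2 := hf1 y hy
      linarith
    exact_mod_cast this
  have hinj : Set.InjOn f S := by
    intro x hx y hy hxy
    by_contra hne
    rcases lt_or_gt_of_ne hne with h | h
    · exact absurd (hmono y hy x hx h) (by rw [hxy]; exact lt_irrefl _)
    · exact absurd (hmono x hx y hy h) (by rw [hxy]; exact lt_irrefl _)
  exact Set.countable_iff_exists_injOn.2
    ⟨fun x => Encodable.encode (f x), fun x hx y hy h =>
      hinj hx hy (Encodable.encode_injective h)⟩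

theorem part2 :
    sSup {r : EReal | ∃ φ ψ : ℝ → ℝ, Integrable φ muI ∧ Integrable ψ muI ∧
      (∀ x ∈ Set.Icc (0:ℝ) 1, ∀ y ∈ Set.Icc (0:ℝ) 1,
        (φ x : EReal) + (ψ y : EReal) ≤ (c0 (x, y) : EReal)) ∧
      r = ((∫ x, φ x ∂muI + ∫ y, ψ y ∂muI : ℝ) : EReal)} = 0 := by
  apply le_antisymm
  · apply sSup_le
    rintro r ⟨φ, ψ, hφint, hψint, hcon, rfl⟩
    have hcnt : {x ∈ Set.Icc (0:ℝ) 1 | 0 < (fun x => ((φ x : EReal))) x + (fun x => ((ψ x : EReal))) x}.Countable :=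
      part1 _ _ (fun x => EReal.coe_ne_top _) (fun y => EReal.coe_ne_top _) hcon
    have hcnt' : {x ∈ Set.Icc (0:ℝ) 1 | 0 < φ x + ψ x}.Countable := by
      refine hcnt.mono ?_
      intro x hx
      refine ⟨hx.1, ?_⟩
      have : (0:EReal) < ((φ x + ψ x : ℝ) : EReal) := by exact_mod_cast hx.2
      push_cast at this
      exact this
    have hae : ∀ᵐ x ∂muI, φ x + ψ x ≤ 0 := by
      rw [ae_iff]
      have : {x | ¬ φ x + ψ x ≤ 0} = {x | 0 < φ x + ψ x} := by
        ext x; simp [not_le]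
      rw [this]
      have hle : muI {x | 0 < φ x + ψ x} ≤ volume {x ∈ Set.Icc (0:ℝ) 1 | 0 < φ x + ψ x} := by
        rw [muI, Measure.restrict_apply']
        · exact measure_mono (fun x hx => ⟨hx.2, hx.1⟩)
        · exact measurableSet_Icc
      exact le_antisymm (hle.trans_eq (hcnt'.measure_zero _)) zero_le
    have hint : ∫ x, φ x ∂muI + ∫ y, ψ y ∂muI ≤ 0 := by
      rw [← integral_add hφint hψint]
      exact integral_nonpos_of_ae hae
    exact_mod_cast hint
  · apply le_sSup
    refine ⟨0, 0, integrable_zero _ _ _, integrable_zero _ _ _, ?_, by simp⟩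
    intro x _ y _
    simp only [Pi.zero_apply, EReal.coe_zero, add_zero]
    exact_mod_cast EReal.coe_ennreal_nonneg _

theorem part3 :
    (⨅ π ∈ {π : Measure (ℝ × ℝ) | π.map Prod.fst = muI ∧ π.map Prod.snd = muI},
      ∫⁻ p, c0 p ∂π) = 1 := by
  apply le_antisymm
  · -- the diagonal coupling gives value 1
    have hd : Measurable (fun x : ℝ => (x, x)) := measurable_id.prodMk measurable_id
    refine iInf₂_le_of_le (muI.map (fun x => (x, x))) ⟨?_, ?_⟩ ?_
    · rw [Measure.map_map measurable_fst hd]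
      exact Measure.map_id
    · rw [Measure.map_map measurable_snd hd]
      exact Measure.map_id
    · rw [lintegral_map c0_meas hd]
      have : ∀ x : ℝ, c0 (x, x) = 1 := by intro x; simp [c0]
      simp only [this]
      rw [lintegral_one, muI_univ]
  · refine le_iInf₂ fun π hπ => ?_
    obtain ⟨h1, h2⟩ := hπ
    have hπuniv : π Set.univ = 1 := by
      have := congrArg (fun m : Measure ℝ => m Set.univ) h1
      simp only [Measure.map_apply measurable_fst MeasurableSet.univ, Set.preimage_univ] at this
      rw [this, muI_univ]
    by_cases hz : π {p : ℝ × ℝ | p.1 < p.2} = 0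
    · -- concentrated below-or-on the diagonal; expectation argument
      have hmfst : Integrable (fun p : ℝ × ℝ => p.1) π := by
        have hid : Integrable (id : ℝ → ℝ) muI := by
          rw [muI]; exact continuous_id.integrableOn_Icc
        rw [← h1] at hid
        exact (integrable_map_measure aestronglyMeasurable_id
          measurable_fst.aemeasurable).mp hid
      have hmsnd : Integrable (fun p : ℝ × ℝ => p.2) π := by
        have hid : Integrable (id : ℝ → ℝ) muI := by
          rw [muI]; exact continuous_id.integrableOn_Icc
        rw [← h2] at hid
        exact (integrable_map_measure aestronglyMeasurable_id
          measurable_snd.aemeasurable).mp hid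
      have hintfst : ∫ p, p.1 ∂π = ∫ x, x ∂muI := by
        rw [← h1]
        exact (integral_map (f := fun x : ℝ => x) measurable_fst.aemeasurable
          measurable_id.aestronglyMeasurable).symm
      have hintsnd : ∫ p, p.2 ∂π = ∫ x, x ∂muI := by
        rw [← h2]
        exact (integral_map (f := fun x : ℝ => x) measurable_snd.aemeasurable
          measurable_id.aestronglyMeasurable).symm
      have hzero : ∫ p, (p.1 - p.2) ∂π = 0 := by
        rw [integral_sub hmfst hmsnd, hintfst, hintsnd, sub_self]
      have hnn0 : ∀ᵐ p ∂π, (0:ℝ) ≤ p.1 - p.2 := by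
        rw [ae_iff]
        have : {p : ℝ × ℝ | ¬ (0:ℝ) ≤ p.1 - p.2} = {p : ℝ × ℝ | p.1 < p.2} := by
          ext p; simp [sub_nonneg, not_le]
        rw [this]; exact hz
      have hnn : 0 ≤ᵐ[π] fun p : ℝ × ℝ => p.1 - p.2 := hnn0.mono fun p hp => hp
      have hae0 : (fun p : ℝ × ℝ => p.1 - p.2) =ᵐ[π] 0 :=
        (integral_eq_zero_iff_of_nonneg_ae hnn (hmfst.sub hmsnd)).mp hzero
      have hne : π {p : ℝ × ℝ | p.1 ≠ p.2} = 0 := by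
        have := ae_iff.mp hae0
        simpa [sub_eq_zero] using this
      have hdiag : (1:ENNReal) ≤ π {p : ℝ × ℝ | p.1 = p.2} := by
        have : π Set.univ ≤ π {p : ℝ × ℝ | p.1 = p.2} + π {p : ℝ × ℝ | p.1 ≠ p.2} := by
          rw [← Set.union_compl_self {p : ℝ × ℝ | p.1 = p.2}]
          exact (measure_union_le _ _).trans (by rfl)
        rw [hπuniv, hne, add_zero] at this
        exact this
      calc (1:ENNReal) ≤ π {p : ℝ × ℝ | p.1 = p.2} := hdiag
        _ = ∫⁻ p, Set.indicator {p : ℝ × ℝ | p.1 = p.2} (fun _ => 1) p ∂π := by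
            rw [lintegral_indicator (measurableSet_eq_fun measurable_fst measurable_snd)]
            simp
        _ ≤ ∫⁻ p, c0 p ∂π := by
            apply lintegral_mono
            intro p
            by_cases hp : p.1 = p.2
            · have hlt : ¬ p.2 < p.1 := by rw [hp]; exact lt_irrefl _
              simp [Set.indicator_apply, Set.mem_setOf_eq, hp, c0, hlt]
            · simp only [Set.indicator_apply, Set.mem_setOf_eq, hp, if_false]
              exact zero_le
    · -- mass strictly above the diagonal: infinite cost
      have : (⊤ : ENNReal) ≤ ∫⁻ p, c0 p ∂π := by
        calc (⊤ : ENNReal) = ⊤ * π {p : ℝ × ℝ | p.1 < p.2} := (ENNReal.top_mul hz).symm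
          _ = ∫⁻ p, Set.indicator {p : ℝ × ℝ | p.1 < p.2} (fun _ => ⊤) p ∂π := by
              rw [lintegral_indicator_const (measurableSet_lt measurable_fst measurable_snd)]
          _ ≤ ∫⁻ p, c0 p ∂π := by
              apply lintegral_mono
              intro p
              by_cases hp : p.1 < p.2
              · have h1 : ¬ p.2 < p.1 := lt_asymm hp
                have h2 : p.1 ≠ p.2 := ne_of_lt hp
                simp [Set.indicator_of_mem hp, c0, h1, h2]
              · simp only [Set.indicator_apply, Set.mem_setOf_eq, hp, if_false]
                exact zero_le
      exact le_trans le_top this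

theorem stmt1 :
    -- any admissible dual pair is positive on at most countably many diagonal points
    (∀ φ ψ : ℝ → EReal, (∀ x, φ x ≠ ⊤) → (∀ y, ψ y ≠ ⊤) →
      (∀ x ∈ Set.Icc (0:ℝ) 1, ∀ y ∈ Set.Icc (0:ℝ) 1, φ x + ψ y ≤ (c0 (x, y) : EReal)) →
      {x ∈ Set.Icc (0:ℝ) 1 | 0 < φ x + ψ x}.Countable) ∧
    -- the dual value is 0
    sSup {r : EReal | ∃ φ ψ : ℝ → ℝ, Integrable φ muI ∧ Integrable ψ muI ∧
      (∀ x ∈ Set.Icc (0:ℝ) 1, ∀ y ∈ Set.Icc (0:ℝ) 1,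
        (φ x : EReal) + (ψ y : EReal) ≤ (c0 (x, y) : EReal)) ∧
      r = ((∫ x, φ x ∂muI + ∫ y, ψ y ∂muI : ℝ) : EReal)} = 0 ∧
    -- while the primal value is 1 : there is a duality gap 0 < 1
    (⨅ π ∈ {π : Measure (ℝ × ℝ) | π.map Prod.fst = muI ∧ π.map Prod.snd = muI},
      ∫⁻ p, c0 p ∂π) = 1 := by
  exact ⟨part1, part2, part3⟩
end

section
/- Let X, Y be Polish spaces with Borel probability measures μ, ν, and let (φ_n : X → ℝ) and (ψ_n : Y → ℝ) be sequences of Borel measurable functions. Then there exist Polish topologies τ_X on X and τ_Y on Y, refining the original topologies and generating the same Borel sets, such that the function sup_n (φ_n(x) + ψ_n(y)) is lower semi-continuous on X × Y with respect to the product topology τ_X × τ_Y. -/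
open MeasureTheory Set

theorem stmt6 {X Y : Type*}
    [tX : TopologicalSpace X] [PolishSpace X] [mX : MeasurableSpace X] [BorelSpace X]
    [tY : TopologicalSpace Y] [PolishSpace Y] [mY : MeasurableSpace Y] [BorelSpace Y]
    (μ : Measure X) (ν : Measure Y) [IsProbabilityMeasure μ] [IsProbabilityMeasure ν]
    (φ : ℕ → X → ℝ) (ψ : ℕ → Y → ℝ)
    (hφ : ∀ n, Measurable (φ n)) (hψ : ∀ n, Measurable (ψ n)) :
    ∃ τX : TopologicalSpace X, ∃ τY : TopologicalSpace Y,
      τX ≤ tX ∧ τY ≤ tY ∧ @PolishSpace X τX ∧ @PolishSpace Y τY ∧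
      @BorelSpace X τX mX ∧ @BorelSpace Y τY mY ∧
      @LowerSemicontinuous (X × Y) EReal (@instTopologicalSpaceProd X Y τX τY) _
        (fun p => ⨆ n, ((φ n p.1 : EReal) + (ψ n p.2 : EReal))) := by
  have pX : @PolishSpace X tX := inferInstance
  have pY : @PolishSpace Y tY := inferInstance
  have hF : Measurable (fun x n => φ n x : X → ℕ → ℝ) :=
    measurable_pi_lambda _ fun n => hφ n
  have hG : Measurable (fun y n => ψ n y : Y → ℕ → ℝ) :=
    measurable_pi_lambda _ fun n => hψ n
  obtain ⟨τX, hτXle, hFc, hτXpolish⟩ := hF.exists_continuous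
  obtain ⟨τY, hτYle, hGc, hτYpolish⟩ := hG.exists_continuous
  have hφc : ∀ n, @Continuous X ℝ τX _ (φ n) := fun n =>
    (continuous_apply n).comp hFc
  have hψc : ∀ n, @Continuous Y ℝ τY _ (ψ n) := fun n =>
    (continuous_apply n).comp hGc
  have hBX : @BorelSpace X τX mX :=
    ⟨(@BorelSpace.measurable_eq X tX mX _).trans
      (borel_eq_borel_of_le hτXpolish pX hτXle).symm⟩
  have hBY : @BorelSpace Y τY mY :=
    ⟨(@BorelSpace.measurable_eq Y tY mY _).trans
      (borel_eq_borel_of_le hτYpolish pY hτYle).symm⟩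
  refine ⟨τX, τY, hτXle, hτYle, hτXpolish, hτYpolish, hBX, hBY, ?_⟩
  apply @lowerSemicontinuous_iSup (X × Y) (@instTopologicalSpaceProd X Y τX τY) ℕ EReal _ _
  intro n
  have : @Continuous (X × Y) EReal (@instTopologicalSpaceProd X Y τX τY) _
      (fun p => ((φ n p.1 : EReal) + (ψ n p.2 : EReal))) := by
    have h1 : @Continuous (X × Y) ℝ (@instTopologicalSpaceProd X Y τX τY) _
        (fun p => φ n p.1 + ψ n p.2) :=
      Continuous.add (Continuous.comp (hφc n) (@continuous_fst X Y τX τY))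
        (Continuous.comp (hψc n) (@continuous_snd X Y τX τY))
    have := continuous_coe_real_ereal.comp h1
    simpa [EReal.coe_add, Function.comp_def] using this
  exact this.lowerSemicontinuous
end

section
/- Let X, Y be Polish spaces with Borel probability measures μ, ν, and let c : X × Y → [0,∞] be a Borel measurable cost function. Then there exists a Borel function c_r : X × Y → [0,∞] such that: (i) for all Borel functions φ : X → [-∞,∞), ψ : Y → [-∞,∞) with φ(x) + ψ(y) ≤ c(x,y) everywhere, one has φ(x) + ψ(y) ≤ c_r(x,y) L-almost surely; and (ii) c_r is minimal with this property, i.e., any other function d satisfying (i) satisfies c_r ≤ d L-almost surely. Moreover, there exist sequences of bounded Borel functions φ_n : X → ℝ, ψ_n : Y → ℝ with φ_n ⊕ ψ_n ≤ c for all n and c_r = sup_n (φ_n ⊕ ψ_n). -/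
open MeasureTheory Set Filter TopologicalSpace
open scoped ENNReal NNReal

/-- A set `A ⊆ X × Y` is `L`-negligible (w.r.t. `μ`, `ν`). -/
def LNeg {X Y : Type*} [MeasurableSpace X] [MeasurableSpace Y]
    (μ : Measure X) (ν : Measure Y) (A : Set (X × Y)) : Prop :=
  ∃ M : Set X, ∃ N : Set Y, MeasurableSet M ∧ MeasurableSet N ∧ μ M = 0 ∧ ν N = 0 ∧
    A ⊆ (M ×ˢ (Set.univ : Set Y)) ∪ ((Set.univ : Set X) ×ˢ N)

/-- Property (i) of a rectification: every Borel dual pair `φ ⊕ ψ ≤ c` satisfies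
`φ ⊕ ψ ≤ d` `L`-almost surely. -/
def SatI {X Y : Type*} [MeasurableSpace X] [MeasurableSpace Y]
    (μ : Measure X) (ν : Measure Y) (c : X × Y → ENNReal) (d : X × Y → ENNReal) : Prop :=
  ∀ φ : X → EReal, ∀ ψ : Y → EReal, Measurable φ → Measurable ψ →
    (∀ x, φ x ≠ ⊤) → (∀ y, ψ y ≠ ⊤) →
    (∀ x y, φ x + ψ y ≤ (c (x, y) : EReal)) →
    LNeg μ ν {p : X × Y | ¬ φ p.1 + ψ p.2 ≤ (d p : EReal)}

/-- `cr` is a rectification of `c`: it satisfies (i) and is `L`-a.s. minimal with it. -/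
def IsRectification {X Y : Type*} [MeasurableSpace X] [MeasurableSpace Y]
    (μ : Measure X) (ν : Measure Y) (c cr : X × Y → ENNReal) : Prop :=
  SatI μ ν c cr ∧
    ∀ d : X × Y → ENNReal, SatI μ ν c d → LNeg μ ν {p : X × Y | ¬ cr p ≤ d p}

section Aux

variable {X Y : Type*} [MeasurableSpace X] [MeasurableSpace Y]
  {μ : Measure X} {ν : Measure Y}

lemma LNeg.mono {A B : Set (X × Y)} (hB : LNeg μ ν B) (h : A ⊆ B) : LNeg μ ν A := by
  obtain ⟨M, N, hM, hN, hM0, hN0, hsub⟩ := hB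
  exact ⟨M, N, hM, hN, hM0, hN0, h.trans hsub⟩

lemma LNeg.iUnion {ι : Sort*} [Countable ι] {A : ι → Set (X × Y)}
    (h : ∀ i, LNeg μ ν (A i)) : LNeg μ ν (⋃ i, A i) := by
  choose M N hM hN hM0 hN0 hsub using h
  refine ⟨⋃ i, M i, ⋃ i, N i, MeasurableSet.iUnion hM, MeasurableSet.iUnion hN,
    measure_iUnion_null hM0, measure_iUnion_null hN0, ?_⟩
  rintro ⟨x, y⟩ hz
  obtain ⟨s, ⟨i, rfl⟩, hzs⟩ := hz
  rcases hsub i hzs with h1 | h1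
  · exact Or.inl ⟨mem_iUnion.2 ⟨i, h1.1⟩, trivial⟩
  · exact Or.inr ⟨trivial, mem_iUnion.2 ⟨i, h1.2⟩⟩

lemma LNeg.empty : LNeg μ ν (∅ : Set (X × Y)) :=
  ⟨∅, ∅, MeasurableSet.empty, MeasurableSet.empty, measure_empty, measure_empty,
    by simp⟩

/-- Dual pair for the cost `c` : a pair of bounded measurable functions whose sum
is everywhere below `c`. -/
def IsDP (c : X × Y → ENNReal) (f : (X → ℝ) × (Y → ℝ)) : Prop :=
  Measurable f.1 ∧ Measurable f.2 ∧ (∃ B, ∀ x, |f.1 x| ≤ B) ∧ (∃ B, ∀ y, |f.2 y| ≤ B) ∧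
    ∀ x y, (f.1 x : EReal) + (f.2 y : EReal) ≤ (c (x, y) : EReal)

/-- The pointwise supremum of the sums of a sequence of pairs. -/
noncomputable def gsup (e : ℕ → (X → ℝ) × (Y → ℝ)) : X × Y → EReal :=
  fun z => ⨆ n, (((e n).1 z.1 + (e n).2 z.2 : ℝ) : EReal)

lemma isDP_zero (c : X × Y → ENNReal) :
    IsDP c ((fun _ => (0 : ℝ)), (fun _ => (0 : ℝ))) := by
  refine ⟨measurable_const, measurable_const, ⟨0, by simp⟩, ⟨0, by simp⟩, fun x y => ?_⟩
  simp only [EReal.coe_zero, add_zero]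
  exact EReal.coe_ennreal_nonneg _


lemma le_gsup {X Y : Type*} (e : ℕ → (X → ℝ) × (Y → ℝ)) (n : ℕ) (z : X × Y) :
    (((e n).1 z.1 + (e n).2 z.2 : ℝ) : EReal) ≤ gsup e z := by
  exact le_iSup (fun m => (((e m).1 z.1 + (e m).2 z.2 : ℝ) : EReal)) n

lemma lt_gsup_exists {X Y : Type*} {e : ℕ → (X → ℝ) × (Y → ℝ)} {z : X × Y} {b : EReal}
    (h : b < gsup e z) : ∃ n, b < (((e n).1 z.1 + (e n).2 z.2 : ℝ) : EReal) := by
  exact lt_iSup_iff.mp (h : b < ⨆ m, (((e m).1 z.1 + (e m).2 z.2 : ℝ) : EReal))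

lemma gsup_le {X Y : Type*} {e : ℕ → (X → ℝ) × (Y → ℝ)} {z : X × Y} {b : EReal}
    (h : ∀ n, (((e n).1 z.1 + (e n).2 z.2 : ℝ) : EReal) ≤ b) : gsup e z ≤ b := by
  exact iSup_le (f := fun m => (((e m).1 z.1 + (e m).2 z.2 : ℝ) : EReal)) h

end Aux


section CoreDefs

variable {X Y : Type*} [MeasurableSpace X] [MeasurableSpace Y]

/-- The type of dual pairs. -/
def DPs (c : X × Y → ENNReal) : Type _ := {f : (X → ℝ) × (Y → ℝ) // IsDP c f}

/-- The zero dual pair. -/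
noncomputable def dZero (c : X × Y → ENNReal) : DPs c :=
  ⟨((fun _ => (0 : ℝ)), (fun _ => (0 : ℝ))), isDP_zero c⟩

open scoped Classical in
noncomputable def enumOf (c : X × Y → ENNReal) (s : Set (DPs c)) : ℕ → DPs c :=
  if h : s.Countable ∧ s.Nonempty then (h.1.exists_eq_range h.2).choose else fun _ => dZero c

lemma enumOf_range (c : X × Y → ENNReal) {s : Set (DPs c)} (h1 : s.Countable)
    (h2 : s.Nonempty) : s = Set.range (enumOf c s) := by
  unfold enumOf
  split_ifs with h
  · exact (h.1.exists_eq_range h.2).choose_spec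
  · exact absurd ⟨h1, h2⟩ h

lemma iio_countable {α : Ordinal} (hα : α < (Cardinal.aleph 1).ord) :
    (Set.Iio α).Countable := by
  rw [Cardinal.countable_iff_lt_aleph_one, Ordinal.mk_Iio_ordinal]
  calc Cardinal.lift α.card < Cardinal.lift (Cardinal.aleph 1) :=
        Cardinal.lift_lt.mpr (Cardinal.lt_ord.mp hα)
    _ ≤ Cardinal.aleph 1 := Cardinal.lift_le_aleph_one.mpr le_rfl

end CoreDefs

section Core

variable {X Y : Type*}
  [TopologicalSpace X] [PolishSpace X] [MeasurableSpace X] [BorelSpace X]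
  [TopologicalSpace Y] [PolishSpace Y] [MeasurableSpace Y] [BorelSpace Y]
  (μ : Measure X) (ν : Measure Y) [IsProbabilityMeasure μ] [IsProbabilityMeasure ν]
  (c : X × Y → ENNReal)

/-- The core lemma: a countable family of dual pairs whose supremum `L`-a.s. dominates
every dual pair. -/
theorem core_exists : ∃ e : ℕ → (X → ℝ) × (Y → ℝ), (∀ n, IsDP c (e n)) ∧
    ∀ f, IsDP c f → ∀ q : ℚ, 0 < q →
      LNeg μ ν {z : X × Y |
        gsup e z + ((q : ℝ) : EReal) ≤ ((f.1 z.1 + f.2 z.2 : ℝ) : EReal)} := by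
  classical
  by_contra hcon
  push_neg at hcon
  -- Repackage the negation using the subtype of dual pairs.
  have H : ∀ e : ℕ → DPs c, ∃ p : DPs c, ∃ q : ℚ, 0 < q ∧
      ¬ LNeg μ ν {z : X × Y |
        gsup (fun n => (e n).1) z + ((q : ℝ) : EReal) ≤
          ((p.1.1 z.1 + p.1.2 z.2 : ℝ) : EReal)} := by
    intro e
    obtain ⟨f, hf, q, hq, hL⟩ := hcon (fun n => (e n).1) (fun n => (e n).2)
    exact ⟨⟨f, hf⟩, q, hq, hL⟩
  choose nf nq hq0 hnL using H
  -- Transfinite recursion up to ω₁.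
  let Fstep : (α : Ordinal.{0}) → ((β : Ordinal.{0}) → β < α → DPs c) → DPs c := fun α IH =>
    nf (enumOf c (insert (dZero c) {d | ∃ β, ∃ h : β < α, IH β h = d}))
  let G : Ordinal.{0} → DPs c := Ordinal.lt_wf.fix Fstep
  have hG : ∀ α : Ordinal.{0}, G α = nf (enumOf c (insert (dZero c) (G '' Set.Iio α))) := by
    intro α
    have h1 : G α = Fstep α (fun β _ => G β) := WellFounded.fix_eq Ordinal.lt_wf Fstep α
    rw [h1]
    show nf (enumOf c (insert (dZero c) {d | ∃ β, ∃ _ : β < α, G β = d})) = _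
    have hset : {d | ∃ β, ∃ _ : β < α, G β = d} = G '' Set.Iio α := by
      ext d
      simp only [Set.mem_setOf_eq, Set.mem_image, Set.mem_Iio, exists_prop]
    rw [hset]
  -- The L¹ spaces.
  haveI fact1 : Fact ((1 : ENNReal) ≤ 1) := ⟨le_rfl⟩
  haveI fact2 : Fact ((1 : ENNReal) ≠ ⊤) := ⟨ENNReal.one_ne_top⟩
  have memφ : ∀ d : DPs c, MemLp d.1.1 1 μ := by
    intro d
    obtain ⟨B, hB⟩ := d.2.2.2.1
    refine (memLp_top_of_bound d.2.1.aestronglyMeasurable B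
      (Filter.Eventually.of_forall (fun x => ?_))).mono_exponent le_top
    simpa [Real.norm_eq_abs] using hB x
  have memψ : ∀ d : DPs c, MemLp d.1.2 1 ν := by
    intro d
    obtain ⟨B, hB⟩ := d.2.2.2.2.1
    refine (memLp_top_of_bound d.2.2.1.aestronglyMeasurable B
      (Filter.Eventually.of_forall (fun y => ?_))).mono_exponent le_top
    simpa [Real.norm_eq_abs] using hB y
  let J : DPs c → Lp ℝ 1 μ × Lp ℝ 1 ν := fun d =>
    (MemLp.toLp d.1.1 (memφ d), MemLp.toLp d.1.2 (memψ d))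
  -- Main claim: each `G α`, `α < ω₁`, is metrically separated from its predecessors.
  have claim1 : ∀ α : Ordinal.{0}, α < (Cardinal.aleph 1).ord → ∃ ε : ℝ, 0 < ε ∧
      ∀ β, β < α → ε ≤ dist (J (G β)) (J (G α)) := by
    intro α hα
    by_contra hno
    push_neg at hno
    -- hno : ∀ ε, 0 < ε → ∃ β, β < α ∧ dist (J (G β)) (J (G α)) < ε
    set eA := enumOf c (insert (dZero c) (G '' Set.Iio α)) with heA
    have hGα : G α = nf eA := hG α
    have hrange : insert (dZero c) (G '' Set.Iio α) = Set.range eA :=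
      enumOf_range c (((iio_countable hα).image G).insert _) ⟨_, Set.mem_insert _ _⟩
    set q : ℚ := nq eA with hqdef
    have hq : 0 < q := hq0 eA
    set q2 : ℝ := (q : ℝ) / 2 with hq2def
    have hq2 : 0 < q2 := by
      have : (0 : ℝ) < (q : ℝ) := by exact_mod_cast hq
      positivity
    have hδ : ∀ j : ℕ, (0 : ℝ) < q2 * (1/2)^j := fun j => by positivity
    choose b hb hdist using fun j : ℕ => hno (q2 * (1/2)^j) (hδ j)
    have hdcomp1 : ∀ j, dist ((J (G (b j))).1) ((J (G α)).1) < q2 * (1/2)^j := fun j =>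
      lt_of_le_of_lt (by rw [Prod.dist_eq]; exact le_sup_left) (hdist j)
    have hdcomp2 : ∀ j, dist ((J (G (b j))).2) ((J (G α)).2) < q2 * (1/2)^j := fun j =>
      lt_of_le_of_lt (by rw [Prod.dist_eq]; exact le_sup_right) (hdist j)
    -- Bad sets on X and on Y.
    set E : ℕ → Set X := fun j =>
      {x | ENNReal.ofReal q2 ≤ (‖(G (b j)).1.1 x - (G α).1.1 x‖₊ : ℝ≥0∞)} with hE
    set F : ℕ → Set Y := fun j =>
      {y | ENNReal.ofReal q2 ≤ (‖(G (b j)).1.2 y - (G α).1.2 y‖₊ : ℝ≥0∞)} with hF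
    have hq2ne : ENNReal.ofReal q2 ≠ 0 := (ENNReal.ofReal_pos.mpr hq2).ne'
    have hEb : ∀ j, μ (E j) ≤ ENNReal.ofReal ((1/2 : ℝ)^j) := by
      intro j
      have hmeas : AEMeasurable (fun x => (‖(G (b j)).1.1 x - (G α).1.1 x‖₊ : ℝ≥0∞)) μ :=
        (((G (b j)).2.1.sub (G α).2.1).enorm).aemeasurable
      have h1 := meas_ge_le_lintegral_div hmeas hq2ne ENNReal.ofReal_ne_top
      have h2 : ∫⁻ x, (‖(G (b j)).1.1 x - (G α).1.1 x‖₊ : ℝ≥0∞) ∂μ ≤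
          ENNReal.ofReal (q2 * (1/2)^j) := by
        calc ∫⁻ x, (‖(G (b j)).1.1 x - (G α).1.1 x‖₊ : ℝ≥0∞) ∂μ
            = eLpNorm ((G (b j)).1.1 - (G α).1.1) 1 μ := by
              rw [eLpNorm_one_eq_lintegral_enorm]; rfl
          _ = eLpNorm (⇑(J (G (b j))).1 - ⇑(J (G α)).1) 1 μ :=
              (eLpNorm_congr_ae (((memφ (G (b j))).coeFn_toLp).sub
                ((memφ (G α)).coeFn_toLp))).symm
          _ = edist (J (G (b j))).1 (J (G α)).1 := (Lp.edist_def _ _).symm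
          _ = ENNReal.ofReal (dist (J (G (b j))).1 (J (G α)).1) := edist_dist _ _
          _ ≤ ENNReal.ofReal (q2 * (1/2)^j) := ENNReal.ofReal_le_ofReal (hdcomp1 j).le
      calc μ (E j) ≤ _ / ENNReal.ofReal q2 := h1
        _ ≤ ENNReal.ofReal (q2 * (1/2)^j) / ENNReal.ofReal q2 :=
            ENNReal.div_le_div_right h2 _
        _ ≤ ENNReal.ofReal ((1/2 : ℝ)^j) := by
            refine ENNReal.div_le_of_le_mul ?_
            rw [← ENNReal.ofReal_mul (by positivity)]
            exact ENNReal.ofReal_le_ofReal (le_of_eq (mul_comm _ _))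
    have hFb : ∀ j, ν (F j) ≤ ENNReal.ofReal ((1/2 : ℝ)^j) := by
      intro j
      have hmeas : AEMeasurable (fun y => (‖(G (b j)).1.2 y - (G α).1.2 y‖₊ : ℝ≥0∞)) ν :=
        (((G (b j)).2.2.1.sub (G α).2.2.1).enorm).aemeasurable
      have h1 := meas_ge_le_lintegral_div hmeas hq2ne ENNReal.ofReal_ne_top
      have h2 : ∫⁻ y, (‖(G (b j)).1.2 y - (G α).1.2 y‖₊ : ℝ≥0∞) ∂ν ≤
          ENNReal.ofReal (q2 * (1/2)^j) := by
        calc ∫⁻ y, (‖(G (b j)).1.2 y - (G α).1.2 y‖₊ : ℝ≥0∞) ∂ν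
            = eLpNorm ((G (b j)).1.2 - (G α).1.2) 1 ν := by
              rw [eLpNorm_one_eq_lintegral_enorm]; rfl
          _ = eLpNorm (⇑(J (G (b j))).2 - ⇑(J (G α)).2) 1 ν :=
              (eLpNorm_congr_ae (((memψ (G (b j))).coeFn_toLp).sub
                ((memψ (G α)).coeFn_toLp))).symm
          _ = edist (J (G (b j))).2 (J (G α)).2 := (Lp.edist_def _ _).symm
          _ = ENNReal.ofReal (dist (J (G (b j))).2 (J (G α)).2) := edist_dist _ _
          _ ≤ ENNReal.ofReal (q2 * (1/2)^j) := ENNReal.ofReal_le_ofReal (hdcomp2 j).le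
      calc ν (F j) ≤ _ / ENNReal.ofReal q2 := h1
        _ ≤ ENNReal.ofReal (q2 * (1/2)^j) / ENNReal.ofReal q2 :=
            ENNReal.div_le_div_right h2 _
        _ ≤ ENNReal.ofReal ((1/2 : ℝ)^j) := by
            refine ENNReal.div_le_of_le_mul ?_
            rw [← ENNReal.ofReal_mul (by positivity)]
            exact ENNReal.ofReal_le_ofReal (le_of_eq (mul_comm _ _))
    have hgeom : ∑' j : ℕ, ENNReal.ofReal ((1/2 : ℝ)^j) ≠ ⊤ := by
      have h1 : ∀ j : ℕ, ENNReal.ofReal ((1/2 : ℝ)^j) = (ENNReal.ofReal (1/2))^j :=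
        fun j => ENNReal.ofReal_pow (by norm_num) j
      rw [tsum_congr h1, ENNReal.tsum_geometric]
      refine ENNReal.inv_ne_top.mpr ?_
      have : ENNReal.ofReal (1/2) < 1 := ENNReal.ofReal_lt_one.mpr (by norm_num)
      exact (tsub_pos_iff_lt.mpr this).ne'
    have hM0 : μ (Filter.limsup E Filter.atTop) = 0 :=
      measure_limsup_atTop_eq_zero
        (ne_top_of_le_ne_top hgeom (ENNReal.tsum_le_tsum hEb))
    have hN0 : ν (Filter.limsup F Filter.atTop) = 0 :=
      measure_limsup_atTop_eq_zero
        (ne_top_of_le_ne_top hgeom (ENNReal.tsum_le_tsum hFb))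
    have hMm : MeasurableSet (Filter.limsup E Filter.atTop) := by
      refine MeasurableSet.measurableSet_limsup (fun j => ?_)
      exact measurableSet_le measurable_const ((G (b j)).2.1.sub (G α).2.1).enorm
    have hNm : MeasurableSet (Filter.limsup F Filter.atTop) := by
      refine MeasurableSet.measurableSet_limsup (fun j => ?_)
      exact measurableSet_le measurable_const ((G (b j)).2.2.1.sub (G α).2.2.1).enorm
    -- Contradiction with the choice of `nf eA`.
    refine hnL eA ⟨Filter.limsup E Filter.atTop, Filter.limsup F Filter.atTop,
      hMm, hNm, hM0, hN0, ?_⟩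
    rintro ⟨x, y⟩ hz
    simp only [Set.mem_setOf_eq] at hz
    rw [← hGα] at hz
    by_contra hout
    simp only [Set.mem_union, Set.mem_prod, Set.mem_univ, and_true, true_and,
      not_or] at hout
    obtain ⟨hxM, hyN⟩ := hout
    have hx' : ∀ᶠ j in Filter.atTop, x ∉ E j :=
      Filter.not_frequently.mp
        (fun hf => hxM (Filter.mem_limsup_iff_frequently_mem.mpr hf))
    have hy' : ∀ᶠ j in Filter.atTop, y ∉ F j :=
      Filter.not_frequently.mp
        (fun hf => hyN (Filter.mem_limsup_iff_frequently_mem.mpr hf))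
    obtain ⟨j, hxj, hyj⟩ := (hx'.and hy').exists
    have habs1 : |(G (b j)).1.1 x - (G α).1.1 x| < q2 := by
      have h3 : (‖(G (b j)).1.1 x - (G α).1.1 x‖₊ : ℝ≥0∞) < ENNReal.ofReal q2 :=
        not_le.mp hxj
      rw [← enorm_eq_nnnorm, Real.enorm_eq_ofReal_abs] at h3
      exact (ENNReal.ofReal_lt_ofReal_iff hq2).mp h3
    have habs2 : |(G (b j)).1.2 y - (G α).1.2 y| < q2 := by
      have h3 : (‖(G (b j)).1.2 y - (G α).1.2 y‖₊ : ℝ≥0∞) < ENNReal.ofReal q2 :=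
        not_le.mp hyj
      rw [← enorm_eq_nnnorm, Real.enorm_eq_ofReal_abs] at h3
      exact (ENNReal.ofReal_lt_ofReal_iff hq2).mp h3
    -- `G (b j)` is dominated by the supremum over the enumerated family.
    have hmem : G (b j) ∈ Set.range eA := by
      rw [← hrange]; exact Set.mem_insert_iff.mpr (Or.inr ⟨b j, hb j, rfl⟩)
    obtain ⟨n, hn⟩ := hmem
    have hle2 : (((G (b j)).1.1 x + (G (b j)).1.2 y : ℝ) : EReal) ≤
        gsup (fun m => (eA m).1) (x, y) := by
      have h4 := le_gsup (fun m => (eA m).1) n (x, y)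
      rw [hn] at h4
      exact h4
    have hchain : (((G (b j)).1.1 x + (G (b j)).1.2 y : ℝ) : EReal) + ((q : ℝ) : EReal) ≤
        (((G α).1.1 x + (G α).1.2 y : ℝ) : EReal) :=
      le_trans (add_le_add hle2 le_rfl) hz
    rw [← EReal.coe_add] at hchain
    have hreal : (G (b j)).1.1 x + (G (b j)).1.2 y + (q : ℝ) ≤
        (G α).1.1 x + (G α).1.2 y := by exact_mod_cast hchain
    have hq2' := abs_lt.mp habs1
    have hq2'' := abs_lt.mp habs2
    rw [hq2def] at hq2' hq2''
    linarith [hq2'.1, hq2'.2, hq2''.1, hq2''.2]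
  -- Now derive a contradiction by counting.
  haveI : Nonempty (Lp ℝ 1 μ × Lp ℝ 1 ν) := ⟨J (dZero c)⟩
  set u := TopologicalSpace.denseSeq (Lp ℝ 1 μ × Lp ℝ 1 ν) with hu_def
  have hu : DenseRange u := TopologicalSpace.denseRange_denseSeq _
  have claim1' : ∀ t : (Set.Iio ((Cardinal.aleph 1).ord : Ordinal.{0})), ∃ ε : ℝ, 0 < ε ∧
      ∀ β, β < t.1 → ε ≤ dist (J (G β)) (J (G t.1)) :=
    fun t => claim1 t.1 t.2
  choose εf hε0 hεlb using claim1'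
  have hkf : ∀ t : (Set.Iio ((Cardinal.aleph 1).ord : Ordinal.{0})),
      ∃ k : ℕ, 1 / ((k : ℝ) + 1) < εf t / 2 :=
    fun t => exists_nat_one_div_lt (half_pos (hε0 t))
  choose kf hk using hkf
  have hnf2 : ∀ t : (Set.Iio ((Cardinal.aleph 1).ord : Ordinal.{0})),
      ∃ m : ℕ, dist (J (G t.1)) (u m) < 1 / (2 * ((kf t : ℝ) + 1)) := by
    intro t
    have hpos : (0 : ℝ) < 1 / (2 * ((kf t : ℝ) + 1)) := by positivity
    exact hu.exists_dist_lt (J (G t.1)) hpos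
  choose mf hm using hnf2
  have hinj : Function.Injective
      (fun t : (Set.Iio ((Cardinal.aleph 1).ord : Ordinal.{0})) => (kf t, mf t)) := by
    intro t t' hteq
    simp only [Prod.mk.injEq] at hteq
    obtain ⟨hkk, hmm⟩ := hteq
    by_contra hne
    have hne' : t.1 ≠ t'.1 := fun h => hne (Subtype.ext h)
    have key : ∀ s s' : (Set.Iio ((Cardinal.aleph 1).ord : Ordinal.{0})),
        s.1 < s'.1 → kf s = kf s' → mf s = mf s' → False := by
      intro s s' hlt hkk' hmm'
      have h1 : dist (J (G s.1)) (J (G s'.1)) ≤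
          dist (J (G s.1)) (u (mf s)) + dist (u (mf s)) (J (G s'.1)) :=
        dist_triangle _ _ _
      have h2 : dist (u (mf s)) (J (G s'.1)) < 1 / (2 * ((kf s' : ℝ) + 1)) := by
        rw [dist_comm, hmm']
        exact hm s' 
      have h3 : dist (J (G s.1)) (u (mf s)) < 1 / (2 * ((kf s : ℝ) + 1)) := hm s
      have h4 : εf s' ≤ dist (J (G s.1)) (J (G s'.1)) := hεlb s' s.1 hlt
      have h5 : 1 / ((kf s' : ℝ) + 1) < εf s' / 2 := hk s'
      rw [hkk'] at h3
      have hpos : (0 : ℝ) < (kf s' : ℝ) + 1 := by positivity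
      have h6 : 1 / (2 * ((kf s' : ℝ) + 1)) + 1 / (2 * ((kf s' : ℝ) + 1)) =
          1 / ((kf s' : ℝ) + 1) := by
        field_simp
        norm_num
      have h7 := hε0 s'
      linarith
    rcases lt_trichotomy t.1 t'.1 with h1 | h1 | h1
    · exact key t t' h1 hkk hmm
    · exact hne' h1
    · exact key t' t h1 hkk.symm hmm.symm
  haveI hcnt : Countable (Set.Iio ((Cardinal.aleph 1).ord : Ordinal.{0})) := hinj.countable
  have hcnt2 : (Set.Iio ((Cardinal.aleph 1).ord : Ordinal.{0})).Countable :=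
    countable_coe_iff.mp hcnt
  rw [Cardinal.countable_iff_lt_aleph_one, Ordinal.mk_Iio_ordinal,
    Cardinal.card_ord] at hcnt2
  exact absurd hcnt2 (not_lt.mpr (Cardinal.aleph_one_le_lift.mpr le_rfl))

end Core

theorem stmt7 {X Y : Type*}
    [TopologicalSpace X] [PolishSpace X] [MeasurableSpace X] [BorelSpace X]
    [TopologicalSpace Y] [PolishSpace Y] [MeasurableSpace Y] [BorelSpace Y]
    (μ : Measure X) (ν : Measure Y) [IsProbabilityMeasure μ] [IsProbabilityMeasure ν]
    (c : X × Y → ENNReal) (hc : Measurable c) :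
    ∃ cr : X × Y → ENNReal, Measurable cr ∧ IsRectification μ ν c cr ∧
      ∃ φ : ℕ → X → ℝ, ∃ ψ : ℕ → Y → ℝ,
        (∀ n, Measurable (φ n)) ∧ (∀ n, Measurable (ψ n)) ∧
        (∀ n, ∃ B : ℝ, ∀ x, |φ n x| ≤ B) ∧ (∀ n, ∃ B : ℝ, ∀ y, |ψ n y| ≤ B) ∧
        (∀ n x y, (φ n x : EReal) + (ψ n y : EReal) ≤ (c (x, y) : EReal)) ∧
        (∀ p : X × Y, (cr p : EReal) = ⨆ n, ((φ n p.1 : EReal) + (ψ n p.2 : EReal))) := by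
  obtain ⟨e0, he0DP, he0⟩ := core_exists μ ν c
  -- prepend the zero pair
  set e : ℕ → (X → ℝ) × (Y → ℝ) := fun n => Nat.casesOn n
    ((fun _ => (0 : ℝ)), (fun _ => (0 : ℝ))) e0 with he_def
  have heDP : ∀ n, IsDP c (e n) := by
    intro n; cases n with
    | zero => exact isDP_zero c
    | succ m => exact he0DP m
  have hge : ∀ z, gsup e0 z ≤ gsup e z := by
    intro z
    exact gsup_le fun n => le_gsup e (n + 1) z
  have hkey : ∀ f, IsDP c f → ∀ q : ℚ, 0 < q →
      LNeg μ ν {z : X × Y |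
        gsup e z + ((q : ℝ) : EReal) ≤ ((f.1 z.1 + f.2 z.2 : ℝ) : EReal)} := by
    intro f hf q hq
    refine (he0 f hf q hq).mono ?_
    intro z hz
    exact le_trans (add_le_add (hge z) le_rfl) hz
  have hg0 : ∀ z, (0 : EReal) ≤ gsup e z := by
    intro z
    have h00 : (((e 0).1 z.1 + (e 0).2 z.2 : ℝ) : EReal) = (0 : EReal) := by
      simp [he_def]
    exact h00 ▸ le_gsup e 0 z
  have hgmeas : Measurable (gsup e) := by
    apply Measurable.iSup
    intro n
    exact (((heDP n).1.comp measurable_fst).add ((heDP n).2.1.comp measurable_snd)).coe_real_ereal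
  -- the rectification
  set cr : X × Y → ENNReal :=
    fun z => if gsup e z = ⊤ then ⊤ else ENNReal.ofReal (gsup e z).toReal with hcr_def
  have hcoe : ∀ z, (cr z : EReal) = gsup e z := by
    intro z
    by_cases hz : gsup e z = ⊤
    · simp [hcr_def, hz]
    · have hzb : gsup e z ≠ ⊥ := ne_bot_of_le_ne_bot (by simp) (hg0 z)
      have h0 : (0 : ℝ) ≤ (gsup e z).toReal := by
        have h1 := hg0 z
        rw [← EReal.coe_toReal hz hzb] at h1
        exact_mod_cast h1
      simp only [hcr_def, if_neg hz]
      rw [EReal.coe_ennreal_ofReal, max_eq_left h0, EReal.coe_toReal hz hzb]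
  have hcrmeas : Measurable cr := by
    refine Measurable.ite (hgmeas (measurableSet_singleton ⊤)) measurable_const ?_
    exact hgmeas.ereal_toReal.ennreal_ofReal
  refine ⟨cr, hcrmeas, ⟨?_, ?_⟩, fun n => (e n).1, fun n => (e n).2,
    fun n => (heDP n).1, fun n => (heDP n).2.1,
    fun n => (heDP n).2.2.1, fun n => (heDP n).2.2.2.1,
    fun n x y => (heDP n).2.2.2.2 x y, ?_⟩
  · -- SatI
    intro φ ψ hφ hψ hφt hψt hle
    -- truncations
    have htr : ∀ k : ℕ, IsDP c
        ((fun x => if (-(k : ℝ) : EReal) ≤ φ x then min (φ x).toReal k else -(3 * k)),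
         (fun y => if (-(k : ℝ) : EReal) ≤ ψ y then min (ψ y).toReal k else -(3 * k))) := by
      intro k
      have hk0 : (0 : ℝ) ≤ (k : ℝ) := Nat.cast_nonneg k
      have hmX : MeasurableSet {x | (-(k : ℝ) : EReal) ≤ φ x} :=
        measurableSet_le measurable_const hφ
      have hmY : MeasurableSet {y | (-(k : ℝ) : EReal) ≤ ψ y} :=
        measurableSet_le measurable_const hψ
      have hb1 : ∀ (ξ : EReal), ξ ≠ ⊤ → (-(k : ℝ) : EReal) ≤ ξ →
          -(k : ℝ) ≤ ξ.toReal ∧ ξ = (ξ.toReal : EReal) := by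
        intro ξ hξt hξ
        have hξb : ξ ≠ ⊥ := ne_bot_of_le_ne_bot (EReal.coe_ne_bot _) hξ
        have hcoe' : ξ = (ξ.toReal : EReal) := (EReal.coe_toReal hξt hξb).symm
        constructor
        · rw [hcoe'] at hξ
          exact_mod_cast hξ
        · exact hcoe'
      refine ⟨Measurable.ite hmX (hφ.ereal_toReal.min measurable_const) measurable_const,
        Measurable.ite hmY (hψ.ereal_toReal.min measurable_const) measurable_const,
        ⟨3 * k, fun x => ?_⟩, ⟨3 * k, fun y => ?_⟩, fun x y => ?_⟩
      · by_cases hx : (-(k : ℝ) : EReal) ≤ φ x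
        · simp only [if_pos hx]
          obtain ⟨h1, _⟩ := hb1 (φ x) (hφt x) hx
          rw [abs_le]
          constructor
          · have : -(k : ℝ) ≤ min (φ x).toReal k := le_min h1 (by linarith)
            linarith
          · have : min (φ x).toReal k ≤ k := min_le_right _ _
            linarith
        · simp only [if_neg hx]
          rw [abs_le]; constructor <;> linarith
      · by_cases hy : (-(k : ℝ) : EReal) ≤ ψ y
        · simp only [if_pos hy]
          obtain ⟨h1, _⟩ := hb1 (ψ y) (hψt y) hy
          rw [abs_le]
          constructor
          · have : -(k : ℝ) ≤ min (ψ y).toReal k := le_min h1 (by linarith)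
            linarith
          · have : min (ψ y).toReal k ≤ k := min_le_right _ _
            linarith
        · simp only [if_neg hy]
          rw [abs_le]; constructor <;> linarith
      · -- the duality inequality
        by_cases hx : (-(k : ℝ) : EReal) ≤ φ x
        · by_cases hy : (-(k : ℝ) : EReal) ≤ ψ y
          · simp only [if_pos hx, if_pos hy]
            obtain ⟨_, hcx⟩ := hb1 (φ x) (hφt x) hx
            obtain ⟨_, hcy⟩ := hb1 (ψ y) (hψt y) hy
            refine le_trans (add_le_add ?_ ?_) (hle x y)
            · rw [hcx]
              exact_mod_cast min_le_left _ _
            · rw [hcy]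
              exact_mod_cast min_le_left _ _
          · -- ψ-branch is -(3k), sum is ≤ 0 ≤ c
            simp only [if_pos hx, if_neg hy]
            have h2 : min (φ x).toReal k ≤ (k : ℝ) := min_le_right _ _
            calc ((min (φ x).toReal k : ℝ) : EReal) + ((-(3 * k) : ℝ) : EReal)
                = ((min (φ x).toReal k + -(3 * (k : ℝ)) : ℝ) : EReal) := by
                  rw [EReal.coe_add]
              _ ≤ ((0 : ℝ) : EReal) := by
                  apply EReal.coe_le_coe_iff.mpr; linarith
              _ ≤ (c (x, y) : EReal) := by
                  simpa using EReal.coe_ennreal_nonneg (c (x, y))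
        · simp only [if_neg hx]
          have h2 : (if (-(k : ℝ) : EReal) ≤ ψ y then min (ψ y).toReal k else -(3 * k)) ≤ (k : ℝ) := by
            by_cases hy : (-(k : ℝ) : EReal) ≤ ψ y
            · rw [if_pos hy]; exact min_le_right (ψ y).toReal (k : ℝ)
            · simp only [if_neg hy]; linarith
          calc ((-(3 * k) : ℝ) : EReal) +
                ((if (-(k : ℝ) : EReal) ≤ ψ y then min (ψ y).toReal k else -(3 * k) : ℝ) : EReal)
              = ((-(3 * (k : ℝ)) +
                (if (-(k : ℝ) : EReal) ≤ ψ y then min (ψ y).toReal k else -(3 * k)) : ℝ) : EReal) := by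
                rw [EReal.coe_add]
            _ ≤ ((0 : ℝ) : EReal) := by
                apply EReal.coe_le_coe_iff.mpr; linarith
            _ ≤ (c (x, y) : EReal) := by
                simpa using EReal.coe_ennreal_nonneg (c (x, y))
    set T : ℕ → (X → ℝ) × (Y → ℝ) := fun k =>
      ((fun x => if (-(k : ℝ) : EReal) ≤ φ x then min (φ x).toReal k else -(3 * k)),
       (fun y => if (-(k : ℝ) : EReal) ≤ ψ y then min (ψ y).toReal k else -(3 * k)))
      with hT_def
    have hTsup : ∀ x y, φ x + ψ y ≤ ⨆ k, (((T k).1 x + (T k).2 y : ℝ) : EReal) := by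
      intro x y
      by_cases hbx : φ x = ⊥
      · rw [hbx, EReal.bot_add]; exact bot_le
      by_cases hby : ψ y = ⊥
      · rw [hby, EReal.add_bot]; exact bot_le
      have hcx : φ x = ((φ x).toReal : EReal) := (EReal.coe_toReal (hφt x) hbx).symm
      have hcy : ψ y = ((ψ y).toReal : EReal) := (EReal.coe_toReal (hψt y) hby).symm
      set rx : ℝ := (φ x).toReal with hrx
      set ry : ℝ := (ψ y).toReal with hry
      set k : ℕ := ⌈max |rx| |ry|⌉₊ with hk_def
      have hkx : |rx| ≤ (k : ℝ) := le_trans (le_max_left _ _) (Nat.le_ceil _)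
      have hky : |ry| ≤ (k : ℝ) := le_trans (le_max_right _ _) (Nat.le_ceil _)
      have hkx1 : -(k : ℝ) ≤ rx := by
        have := abs_le.mp hkx; exact this.1
      have hkx2 : rx ≤ (k : ℝ) := (abs_le.mp hkx).2
      have hky1 : -(k : ℝ) ≤ ry := (abs_le.mp hky).1
      have hky2 : ry ≤ (k : ℝ) := (abs_le.mp hky).2
      have hcondx : (-(k : ℝ) : EReal) ≤ φ x := by
        rw [hcx]; exact_mod_cast hkx1
      have hcondy : (-(k : ℝ) : EReal) ≤ ψ y := by
        rw [hcy]; exact_mod_cast hky1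
      have hTk : (((T k).1 x + (T k).2 y : ℝ) : EReal) = φ x + ψ y := by
        simp only [hT_def, if_pos hcondx, if_pos hcondy, ← hrx, ← hry,
          min_eq_left hkx2, min_eq_left hky2]
        rw [EReal.coe_add, ← hcx, ← hcy]
      exact hTk ▸ le_iSup (fun m => (((T m).1 x + (T m).2 y : ℝ) : EReal)) k
    have hVsub : {p : X × Y | ¬ φ p.1 + ψ p.2 ≤ (cr p : EReal)} ⊆
        ⋃ k : ℕ, ⋃ q : ℚ, {z : X × Y | 0 < q ∧
          gsup e z + ((q : ℝ) : EReal) ≤ (((T k).1 z.1 + (T k).2 z.2 : ℝ) : EReal)} := by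
      rintro ⟨x, y⟩ hz
      simp only [mem_setOf_eq, not_le, hcoe] at hz
      have h1 : gsup e (x, y) < ⨆ k, (((T k).1 x + (T k).2 y : ℝ) : EReal) :=
        lt_of_lt_of_le hz (hTsup x y)
      obtain ⟨k, hk⟩ := lt_iSup_iff.mp h1
      have hgt : gsup e (x, y) ≠ ⊤ := ne_top_of_lt hk
      have hgb : gsup e (x, y) ≠ ⊥ := ne_bot_of_le_ne_bot (by simp) (hg0 _)
      set a : ℝ := (gsup e (x, y)).toReal with ha_def
      have hga : gsup e (x, y) = (a : EReal) := (EReal.coe_toReal hgt hgb).symm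
      rw [hga] at hk
      have hak : a < (T k).1 x + (T k).2 y := by exact_mod_cast hk
      obtain ⟨q, hq1, hq2⟩ := exists_rat_btwn (sub_pos.mpr hak)
      refine mem_iUnion.2 ⟨k, mem_iUnion.2 ⟨q, ?_⟩⟩
      have hq0 : 0 < q := by exact_mod_cast hq1
      refine ⟨hq0, ?_⟩
      show gsup e (x, y) + ((q : ℝ) : EReal) ≤ _
      rw [hga, ← EReal.coe_add]
      have : a + (q : ℝ) ≤ (T k).1 x + (T k).2 y := by linarith
      exact_mod_cast this
    refine (LNeg.iUnion fun k => LNeg.iUnion fun q => ?_).mono hVsub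
    by_cases hq : 0 < q
    · have := hkey (T k) (htr k) q hq
      refine this.mono ?_
      intro z hz
      exact hz.2
    · have : {z : X × Y | 0 < q ∧
          gsup e z + ((q : ℝ) : EReal) ≤ (((T k).1 z.1 + (T k).2 z.2 : ℝ) : EReal)} = ∅ := by
        ext z; simp [hq]
      rw [this]
      exact LNeg.empty
  · -- minimality
    intro d hd
    have hsub : {p : X × Y | ¬ cr p ≤ d p} ⊆
        ⋃ n : ℕ, {p : X × Y | ¬ (((e n).1 p.1 : EReal) + ((e n).2 p.2 : EReal) ≤ (d p : EReal))} := by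
      rintro ⟨x, y⟩ hz
      simp only [mem_setOf_eq, not_le] at hz
      have h1 : ((d (x, y) : ENNReal) : EReal) < (cr (x, y) : EReal) :=
        EReal.coe_ennreal_lt_coe_ennreal_iff.mpr hz
      rw [hcoe] at h1
      obtain ⟨n, hn⟩ := lt_gsup_exists h1
      refine mem_iUnion.2 ⟨n, ?_⟩
      simp only [mem_setOf_eq, not_le]
      rw [← EReal.coe_add]
      exact hn
    refine (LNeg.iUnion fun n => ?_).mono hsub
    exact hd (fun x => ((e n).1 x : EReal)) (fun y => ((e n).2 y : EReal))
      ((heDP n).1.coe_real_ereal) ((heDP n).2.1.coe_real_ereal)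
      (fun x => EReal.coe_ne_top _) (fun y => EReal.coe_ne_top _)
      (fun x y => (heDP n).2.2.2.2 x y)
  · -- sup representation
    intro p
    rw [hcoe]
    exact iSup_congr fun n => EReal.coe_add _ _
end

section
/- Let c : X × Y → [0,∞] be lower semi-continuous, where X and Y are second-countable topological spaces. Let (U_n) and (V_m) be countable bases of X and Y, and set e_{n,m} := inf{c(x,y) : (x,y) ∈ U_n × V_m}. Then c(x,y) = sup{e_{n,m} : x ∈ U_n, y ∈ V_m} for all (x,y), and in particular c is a countable supremum of functions of the form φ ⊕ ψ with φ ⊕ ψ ≤ c, where φ, ψ take only the values e_{n,m} and -∞ (or a value making the sum ≤ 0 off U_n × V_m). -/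
open MeasureTheory Set

private lemma coe_ennreal_iSup' {ι : Sort*} [Nonempty ι] (f : ι → ENNReal) :
    ((⨆ i, f i : ENNReal) : EReal) = ⨆ i, (f i : EReal) :=
  Monotone.map_ciSup_of_continuousAt continuous_coe_ennreal_ereal.continuousAt
    EReal.coe_ennreal_strictMono.monotone

/-- A lower semi-continuous cost on a product of second-countable spaces is the supremum of
the constants `e_{n,m} = inf over U_n × V_m of c` over the basis rectangles containing the
point; in particular it is a countable supremum of functions `φ ⊕ ψ ≤ c`. -/
theorem stmt11 {X Y : Type*} [TopologicalSpace X] [TopologicalSpace Y]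
    [SecondCountableTopology X] [SecondCountableTopology Y]
    (c : X × Y → ENNReal) (hc : LowerSemicontinuous c)
    (U : ℕ → Set X) (V : ℕ → Set Y)
    (hU : TopologicalSpace.IsTopologicalBasis (Set.range U))
    (hV : TopologicalSpace.IsTopologicalBasis (Set.range V)) :
    (∀ x y, c (x, y) =
      ⨆ n, ⨆ m, ⨆ (_ : x ∈ U n ∧ y ∈ V m), ⨅ p ∈ U n ×ˢ V m, c p) ∧
    ∃ φ : ℕ → X → EReal, ∃ ψ : ℕ → Y → EReal,
      (∀ k x y, φ k x + ψ k y ≤ (c (x, y) : EReal)) ∧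
      (∀ x y, (c (x, y) : EReal) = ⨆ k, (φ k x + ψ k y)) := by
  classical
  set e : ℕ → ℕ → ENNReal := fun n m => ⨅ p ∈ U n ×ˢ V m, c p with he
  have key : ∀ x y, c (x, y) = ⨆ n, ⨆ m, ⨆ (_ : x ∈ U n ∧ y ∈ V m), e n m := by
    intro x y
    apply le_antisymm
    · refine le_of_forall_lt fun a ha => ?_
      obtain ⟨b, hab, hb⟩ := exists_between ha
      have hev : {p : X × Y | b < c p} ∈ nhds (x, y) := hc (x, y) b hb
      obtain ⟨t, ht, hto, hxt⟩ := mem_nhds_iff.mp hev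
      obtain ⟨w, hw, hxw, hws⟩ := (hU.prod hV).exists_subset_of_mem_open hxt hto
      rcases hw with ⟨u, ⟨n, rfl⟩, v, ⟨m, rfl⟩, rfl⟩
      have hmem : x ∈ U n ∧ y ∈ V m := hxw
      have hbe : b ≤ e n m := by
        refine le_iInf₂ fun p hp => ?_
        exact le_of_lt (ht (hws hp))
      calc a < b := hab
        _ ≤ e n m := hbe
        _ ≤ ⨆ (_ : x ∈ U n ∧ y ∈ V m), e n m := le_iSup_iff.mpr fun _ h => h hmem
        _ ≤ _ := le_iSup₂ (f := fun n m => ⨆ (_ : x ∈ U n ∧ y ∈ V m), e n m) n m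
    · refine iSup₂_le fun n m => iSup_le fun h => ?_
      exact iInf₂_le (x, y) ⟨h.1, h.2⟩
  refine ⟨key, ?_⟩
  refine ⟨fun k x => if x ∈ U (Nat.unpair k).1
            then ((e (Nat.unpair k).1 (Nat.unpair k).2 : ENNReal) : EReal) else ⊥,
          fun k y => if y ∈ V (Nat.unpair k).2 then (0 : EReal) else ⊥, ?_, ?_⟩
  · intro k x y
    by_cases hx : x ∈ U (Nat.unpair k).1
    · by_cases hy : y ∈ V (Nat.unpair k).2
      · simp only [if_pos hx, if_pos hy, add_zero]
        have : e (Nat.unpair k).1 (Nat.unpair k).2 ≤ c (x, y) :=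
          iInf₂_le (x, y) (Set.mk_mem_prod hx hy)
        exact_mod_cast this
      · simp only [if_neg hy, EReal.add_bot]; exact bot_le
    · simp only [if_neg hx, EReal.bot_add]; exact bot_le
  · intro x y
    -- pick a rectangle containing (x, y)
    obtain ⟨u, ⟨n0, rfl⟩, hxn0, -⟩ :=
      hU.exists_subset_of_mem_open (mem_univ x) isOpen_univ
    obtain ⟨v, ⟨m0, rfl⟩, hym0, -⟩ :=
      hV.exists_subset_of_mem_open (mem_univ y) isOpen_univ
    have sup_nonneg : (0 : EReal) ≤ ⨆ k, ((if x ∈ U (Nat.unpair k).1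
        then ((e (Nat.unpair k).1 (Nat.unpair k).2 : ENNReal) : EReal) else ⊥) +
        (if y ∈ V (Nat.unpair k).2 then (0 : EReal) else ⊥)) := by
      refine le_trans ?_ (le_iSup _ (Nat.pair n0 m0))
      simp only [Nat.unpair_pair, if_pos hxn0, if_pos hym0, add_zero]
      exact EReal.coe_ennreal_nonneg _
    apply le_antisymm
    · rw [key x y, coe_ennreal_iSup', iSup_le_iff]
      intro n
      rw [coe_ennreal_iSup', iSup_le_iff]
      intro m
      by_cases h : x ∈ U n ∧ y ∈ V m
      · rw [iSup_pos h]
        refine le_trans ?_ (le_iSup _ (Nat.pair n m))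
        simp only [Nat.unpair_pair, if_pos h.1, if_pos h.2, add_zero, le_refl]
      · rw [iSup_neg h]
        simpa using sup_nonneg
    · refine iSup_le fun k => ?_
      by_cases hx : x ∈ U (Nat.unpair k).1
      · by_cases hy : y ∈ V (Nat.unpair k).2
        · simp only [if_pos hx, if_pos hy, add_zero]
          have : e (Nat.unpair k).1 (Nat.unpair k).2 ≤ c (x, y) :=
            iInf₂_le (x, y) (Set.mk_mem_prod hx hy)
          exact_mod_cast this
        · simp only [if_neg hy, EReal.add_bot]; exact bot_le
      · simp only [if_neg hx, EReal.bot_add]; exact bot_le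
end

section
/- Let X, Y be Polish spaces with Borel probability measures μ, ν, and c : X × Y → [0,∞] Borel with rectification c_r. Then the dual values coincide: D_c = D_{c_r}, where D_d := sup{∫φ dμ + ∫ψ dν : φ ∈ L¹(μ), ψ ∈ L¹(ν), φ ⊕ ψ ≤ d everywhere}. -/
open MeasureTheory Set Filter Topology

/-- The dual Monge–Kantorovich value of a cost `d`, as an extended real. -/
noncomputable def Dval {X Y : Type*} [MeasurableSpace X] [MeasurableSpace Y]
    (μ : Measure X) (ν : Measure Y) (d : X × Y → ENNReal) : EReal :=
  sSup {r : EReal | ∃ φ : X → ℝ, ∃ ψ : Y → ℝ, Integrable φ μ ∧ Integrable ψ ν ∧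
    (∀ x y, (φ x : EReal) + (ψ y : EReal) ≤ (d (x, y) : EReal)) ∧
    r = ((∫ x, φ x ∂μ + ∫ y, ψ y ∂ν : ℝ) : EReal)}

/-- The primal Monge–Kantorovich value of a cost `d`, as an extended real. -/
noncomputable def Pval {X Y : Type*} [MeasurableSpace X] [MeasurableSpace Y]
    (μ : Measure X) (ν : Measure Y) (d : X × Y → ENNReal) : EReal :=
  ⨅ π ∈ {π : Measure (X × Y) | π.map Prod.fst = μ ∧ π.map Prod.snd = ν},
    ((∫⁻ p, d p ∂π : ENNReal) : EReal)

section Aux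

variable {X Y : Type*} [MeasurableSpace X] [MeasurableSpace Y]

lemma trunc_abs_le (a : ℝ) (n : ℕ) : |min a (n : ℝ)| ≤ |a| := by
  rw [abs_le]
  exact ⟨le_min (neg_abs_le _) ((neg_nonpos.2 (abs_nonneg _)).trans (Nat.cast_nonneg n)),
    (min_le_left _ _).trans (le_abs_self _)⟩

lemma trunc_tendsto {Z : Type*} [MeasurableSpace Z] (μ : Measure Z)
    (φ : Z → ℝ) (hφ : Integrable φ μ) :
    Tendsto (fun n : ℕ => ∫ x, min (φ x) (n : ℝ) ∂μ) atTop (𝓝 (∫ x, φ x ∂μ)) := by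
  refine tendsto_integral_of_dominated_convergence (fun x => |φ x|)
    (fun n => hφ.aestronglyMeasurable.inf aestronglyMeasurable_const) hφ.abs ?_ ?_
  · intro n
    filter_upwards with x
    rw [Real.norm_eq_abs]
    exact trunc_abs_le _ _
  · filter_upwards with x
    refine Tendsto.congr' ?_ tendsto_const_nhds
    filter_upwards [eventually_ge_atTop ⌈φ x⌉₊] with n hn
    exact (min_eq_left ((Nat.le_ceil _).trans (by exact_mod_cast hn))).symm

/-- Key lemma: if a real integrable dual pair satisfies the constraint off a null
rectangle union, then its value is at most `Dval μ ν d`. -/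
lemma key (μ : Measure X) (ν : Measure Y) [IsProbabilityMeasure μ] [IsProbabilityMeasure ν]
    (d : X × Y → ENNReal) (M : Set X) (N : Set Y) (hM : μ M = 0) (hN : ν N = 0)
    (φ : X → ℝ) (ψ : Y → ℝ) (hφ : Integrable φ μ) (hψ : Integrable ψ ν)
    (hle : ∀ x ∉ M, ∀ y ∉ N, (φ x : EReal) + (ψ y : EReal) ≤ (d (x, y) : EReal)) :
    ((∫ x, φ x ∂μ + ∫ y, ψ y ∂ν : ℝ) : EReal) ≤ Dval μ ν d := by
  classical
  set φn : ℕ → X → ℝ := fun n x => if x ∈ M then min (φ x) (-(n : ℝ)) else min (φ x) (n : ℝ)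
    with hφn
  set ψn : ℕ → Y → ℝ := fun n y => if y ∈ N then min (ψ y) (-(n : ℝ)) else min (ψ y) (n : ℝ)
    with hψn
  have hφae : ∀ n : ℕ, φn n =ᵐ[μ] fun x => min (φ x) (n : ℝ) := by
    intro n
    refine (measure_mono_null ?_ hM : μ {x | φn n x ≠ min (φ x) (n:ℝ)} = 0)
    intro x hx
    by_contra hxM
    exact hx (if_neg hxM)
  have hψae : ∀ n : ℕ, ψn n =ᵐ[ν] fun y => min (ψ y) (n : ℝ) := by
    intro n
    refine (measure_mono_null ?_ hN : ν {y | ψn n y ≠ min (ψ y) (n:ℝ)} = 0)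
    intro y hy
    by_contra hyN
    exact hy (if_neg hyN)
  have hφint : ∀ n : ℕ, Integrable (fun x => min (φ x) (n:ℝ)) μ := fun n =>
    (hφ.abs.mono' (hφ.aestronglyMeasurable.inf aestronglyMeasurable_const)
      (Filter.Eventually.of_forall fun x => by
        rw [Real.norm_eq_abs]; exact trunc_abs_le _ _))
  have hψint : ∀ n : ℕ, Integrable (fun y => min (ψ y) (n:ℝ)) ν := fun n =>
    (hψ.abs.mono' (hψ.aestronglyMeasurable.inf aestronglyMeasurable_const)
      (Filter.Eventually.of_forall fun y => by
        rw [Real.norm_eq_abs]; exact trunc_abs_le _ _))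
  have hmem : ∀ n : ℕ,
      ((∫ x, min (φ x) (n:ℝ) ∂μ + ∫ y, min (ψ y) (n:ℝ) ∂ν : ℝ) : EReal) ≤ Dval μ ν d := by
    intro n
    refine le_sSup ⟨φn n, ψn n, (hφint n).congr (hφae n).symm, (hψint n).congr (hψae n).symm,
      ?_, ?_⟩
    · intro x y
      have hψnle : ψn n y ≤ (n : ℝ) := by
        by_cases hy : y ∈ N
        · simp only [hψn, if_pos hy]
          exact (min_le_right _ _).trans (neg_le_self (Nat.cast_nonneg n))
        · simp only [hψn, if_neg hy]
          exact min_le_right _ _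
      have hφnle : φn n x ≤ (n : ℝ) := by
        by_cases hx : x ∈ M
        · simp only [hφn, if_pos hx]
          exact (min_le_right _ _).trans (neg_le_self (Nat.cast_nonneg n))
        · simp only [hφn, if_neg hx]
          exact min_le_right _ _
      rw [← EReal.coe_add]
      by_cases hx : x ∈ M
      · refine le_trans ?_ (EReal.coe_ennreal_nonneg _)
        rw [show ((0:EReal)) = ((0:ℝ) : EReal) from rfl, EReal.coe_le_coe_iff]
        have : φn n x ≤ -(n:ℝ) := by simp only [hφn, if_pos hx]; exact min_le_right _ _
        linarith
      by_cases hy : y ∈ N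
      · refine le_trans ?_ (EReal.coe_ennreal_nonneg _)
        rw [show ((0:EReal)) = ((0:ℝ) : EReal) from rfl, EReal.coe_le_coe_iff]
        have : ψn n y ≤ -(n:ℝ) := by simp only [hψn, if_pos hy]; exact min_le_right _ _
        linarith
      · refine le_trans ?_ (hle x hx y hy)
        rw [← EReal.coe_add, EReal.coe_le_coe_iff]
        have h1 : φn n x ≤ φ x := by simp only [hφn, if_neg hx]; exact min_le_left _ _
        have h2 : ψn n y ≤ ψ y := by simp only [hψn, if_neg hy]; exact min_le_left _ _
        linarith
    · rw [EReal.coe_eq_coe_iff]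
      rw [integral_congr_ae (hφae n), integral_congr_ae (hψae n)]
  have htd : Tendsto (fun n : ℕ =>
      ((∫ x, min (φ x) (n:ℝ) ∂μ + ∫ y, min (ψ y) (n:ℝ) ∂ν : ℝ) : EReal)) atTop
      (𝓝 ((∫ x, φ x ∂μ + ∫ y, ψ y ∂ν : ℝ) : EReal)) := by
    rw [EReal.tendsto_coe]
    exact (trunc_tendsto μ φ hφ).add (trunc_tendsto ν ψ hψ)
  exact le_of_tendsto htd (Filter.Eventually.of_forall hmem)

end Aux

/-- The dual values for `c` and for its rectification coincide. -/
theorem stmt12 {X Y : Type*}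
    [TopologicalSpace X] [PolishSpace X] [MeasurableSpace X] [BorelSpace X]
    [TopologicalSpace Y] [PolishSpace Y] [MeasurableSpace Y] [BorelSpace Y]
    (μ : Measure X) (ν : Measure Y) [IsProbabilityMeasure μ] [IsProbabilityMeasure ν]
    (c : X × Y → ENNReal) (hc : Measurable c) (cr : X × Y → ENNReal)
    (hcr : Measurable cr) (h : IsRectification μ ν c cr) :
    Dval μ ν c = Dval μ ν cr := by
  classical
  apply le_antisymm
  · -- Dval c ≤ Dval cr, via SatI
    refine sSup_le ?_
    rintro r ⟨φ, ψ, hφ, hψ, hle, rfl⟩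
    -- measurable versions
    obtain ⟨φ₀, hφ₀m, hφ₀⟩ := hφ.aemeasurable
    obtain ⟨ψ₀, hψ₀m, hψ₀⟩ := hψ.aemeasurable
    set A := toMeasurable μ {x | φ x ≠ φ₀ x} with hA
    set B := toMeasurable ν {y | ψ y ≠ ψ₀ y} with hB
    have hA0 : μ A = 0 := by
      rw [hA, measure_toMeasurable]
      exact hφ₀
    have hB0 : ν B = 0 := by
      rw [hB, measure_toMeasurable]
      exact hψ₀
    have hAe : ∀ x ∉ A, φ x = φ₀ x := fun x hx => by
      by_contra hne
      exact hx (subset_toMeasurable _ _ hne)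
    have hBe : ∀ y ∉ B, ψ y = ψ₀ y := fun y hy => by
      by_contra hne
      exact hy (subset_toMeasurable _ _ hne)
    set Φ : X → EReal := fun x => if x ∈ A then ⊥ else (φ₀ x : EReal) with hΦ
    set Ψ : Y → EReal := fun y => if y ∈ B then ⊥ else (ψ₀ y : EReal) with hΨ
    have hΦm : Measurable Φ :=
      Measurable.ite (measurableSet_toMeasurable _ _) measurable_const hφ₀m.coe_real_ereal
    have hΨm : Measurable Ψ :=
      Measurable.ite (measurableSet_toMeasurable _ _) measurable_const hψ₀m.coe_real_ereal
    have hΦt : ∀ x, Φ x ≠ ⊤ := by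
      intro x
      by_cases hx : x ∈ A <;> simp [hΦ, hx]
    have hΨt : ∀ y, Ψ y ≠ ⊤ := by
      intro y
      by_cases hy : y ∈ B <;> simp [hΨ, hy]
    have hΦΨ : ∀ x y, Φ x + Ψ y ≤ (c (x, y) : EReal) := by
      intro x y
      by_cases hx : x ∈ A
      · simp only [hΦ, if_pos hx, EReal.bot_add]
        exact bot_le
      by_cases hy : y ∈ B
      · simp only [hΨ, if_pos hy, EReal.add_bot]
        exact bot_le
      · simp only [hΦ, hΨ, if_neg hx, if_neg hy]
        rw [← hAe x hx, ← hBe y hy]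
        exact hle x y
    obtain ⟨M, N, _, _, hM0, hN0, hsub⟩ := h.1 Φ Ψ hΦm hΨm hΦt hΨt hΦΨ
    refine key μ ν cr (M ∪ A) (N ∪ B) (measure_union_null hM0 hA0)
      (measure_union_null hN0 hB0) φ ψ hφ hψ ?_
    intro x hx y hy
    have hx' : x ∉ M := fun hc => hx (Or.inl hc)
    have hy' : y ∉ N := fun hc => hy (Or.inl hc)
    have hxA : x ∉ A := fun hc => hx (Or.inr hc)
    have hyB : y ∉ B := fun hc => hy (Or.inr hc)
    have hgood : (x, y) ∉ {p : X × Y | ¬ Φ p.1 + Ψ p.2 ≤ (cr p : EReal)} := by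
      intro hbad
      rcases hsub hbad with h1 | h1
      · exact hx' h1.1
      · exact hy' h1.2
    have : Φ x + Ψ y ≤ (cr (x, y) : EReal) := not_not.mp hgood
    simp only [hΦ, hΨ, if_neg hxA, if_neg hyB] at this
    rw [hAe x hxA, hBe y hyB]
    exact this
  · -- Dval cr ≤ Dval c, via minimality: cr ≤ c L-a.s.
    have hcc : SatI μ ν c c := by
      intro φ ψ _ _ _ _ hle
      refine ⟨∅, ∅, MeasurableSet.empty, MeasurableSet.empty, measure_empty, measure_empty, ?_⟩
      intro p hp
      exact absurd (hle p.1 p.2) hp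
    obtain ⟨M, N, _, _, hM0, hN0, hsub⟩ := h.2 c hcc
    refine sSup_le ?_
    rintro r ⟨φ, ψ, hφ, hψ, hle, rfl⟩
    refine key μ ν c M N hM0 hN0 φ ψ hφ hψ ?_
    intro x hx y hy
    have hgood : (x, y) ∉ {p : X × Y | ¬ cr p ≤ c p} := by
      intro hbad
      rcases hsub hbad with h1 | h1
      · exact hx h1.1
      · exact hy h1.2
    refine (hle x y).trans ?_
    exact EReal.coe_ennreal_le_coe_ennreal_iff.2 (not_not.mp hgood)
end

section
/- Let X, Y be Polish spaces, μ, ν Borel probability measures, and let g : X × Y → [0,∞] be of the form g = sup_n (φ_n ⊕ ψ_n) with φ_n : X → ℝ, ψ_n : Y → ℝ bounded Borel. Then the functional π ↦ ∫∫ g dπ is sequentially lower semi-continuous on Π(μ,ν) with respect to weak* convergence, even though g itself need not be lower semi-continuous on X × Y. -/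
open MeasureTheory Set

lemma stmt16_aux_sup (g : ENNReal) (a : ℕ → ℝ)
    (hg : (g : EReal) = ⨆ n, (a n : EReal)) :
    g = ⨆ N : ℕ, ENNReal.ofReal ((Finset.range (N + 1)).fold max 0 a) := by
  have hfold : ∀ N : ℕ, (((Finset.range (N + 1)).fold max 0 a : ℝ) : EReal)
      = (Finset.range (N + 1)).fold max (((0 : ℝ) : EReal)) (fun n => (a n : EReal)) :=
    fun N => (Finset.fold_hom (fun x y : ℝ =>
      (EReal.coe_strictMono.monotone.map_max (a := x) (b := y)))).symm
  refine le_antisymm ?_ ?_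
  · rw [← EReal.coe_ennreal_le_coe_ennreal_iff, hg]
    refine iSup_le fun n => ?_
    have h1 : a n ≤ (Finset.range (n + 1)).fold max 0 a :=
      (Finset.le_fold_max _).2 (Or.inr ⟨n, Finset.self_mem_range_succ n, le_rfl⟩)
    calc (a n : EReal) ≤ (((Finset.range (n + 1)).fold max 0 a : ℝ) : EReal) := by
          exact_mod_cast h1
      _ ≤ ((ENNReal.ofReal ((Finset.range (n + 1)).fold max 0 a) : ENNReal) : EReal) := by
          rw [EReal.coe_ennreal_ofReal]
          exact_mod_cast le_max_left _ _
      _ ≤ _ := EReal.coe_ennreal_le_coe_ennreal_iff.2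
          (le_iSup (fun N => ENNReal.ofReal ((Finset.range (N + 1)).fold max 0 a)) n)
  · refine iSup_le fun N => ?_
    rw [← EReal.coe_ennreal_le_coe_ennreal_iff, EReal.coe_ennreal_ofReal]
    have h2 : ((((Finset.range (N + 1)).fold max 0 a) ⊔ (0 : ℝ) : ℝ) : EReal)
        = (((Finset.range (N + 1)).fold max 0 a : ℝ) : EReal) ⊔ (((0 : ℝ) : EReal)) :=
      EReal.coe_strictMono.monotone.map_max
    rw [h2]
    refine max_le ?_ (by simpa using EReal.coe_ennreal_nonneg g)
    rw [hfold N]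
    refine (Finset.fold_max_le _).2 ⟨by simpa using EReal.coe_ennreal_nonneg g, fun n _ => ?_⟩
    rw [hg]
    exact le_iSup (fun n => (a n : EReal)) n

lemma stmt16_aux_diff (s : Finset ℕ) (a b e : ℕ → ℝ)
    (hab : ∀ n ∈ s, |a n - b n| ≤ e n) (he : ∀ n ∈ s, 0 ≤ e n) :
    |s.fold max 0 a - s.fold max 0 b| ≤ ∑ n ∈ s, e n := by
  have hsum : (0 : ℝ) ≤ ∑ n ∈ s, e n := Finset.sum_nonneg he
  have key : ∀ x y : ℕ → ℝ, (∀ n ∈ s, x n ≤ y n + e n) →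
      s.fold max 0 x ≤ s.fold max 0 y + ∑ n ∈ s, e n := by
    intro x y hxy
    refine (Finset.fold_max_le _).2 ⟨?_, fun n hn => ?_⟩
    · have h0 : (0 : ℝ) ≤ s.fold max 0 y := (Finset.le_fold_max _).2 (Or.inl le_rfl)
      linarith
    · have h1 : y n ≤ s.fold max 0 y := (Finset.le_fold_max _).2 (Or.inr ⟨n, hn, le_rfl⟩)
      have h2 : e n ≤ ∑ m ∈ s, e m := Finset.single_le_sum he hn
      have h3 := hxy n hn
      linarith
  rw [abs_sub_le_iff]
  constructor
  · have h4 := key a b fun n hn => by have := abs_le.1 (hab n hn); linarith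
    linarith
  · have h5 := key b a fun n hn => by have := abs_le.1 (hab n hn); linarith
    linarith

lemma stmt16_aux_comp {A B : Type*} [MeasurableSpace A] [MeasurableSpace B]
    (ρ : Measure A) (μ : Measure B) (q : A → B) (hq : Measurable q) (hm : ρ.map q = μ)
    (w : B → ℝ) (hw : Measurable w) (hint : Integrable w μ) :
    Integrable (fun p => w (q p)) ρ ∧ (∫ p, w (q p) ∂ρ) = ∫ x, w x ∂μ := by
  subst hm
  exact ⟨(integrable_map_measure hw.aestronglyMeasurable hq.aemeasurable).1 hint,
    (integral_map hq.aemeasurable hw.aestronglyMeasurable).symm⟩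

lemma stmt16_aux_int {Z : Type*} [MeasurableSpace Z] (ρ : Measure Z) [IsFiniteMeasure ρ]
    (w : Z → ℝ) (hw : Measurable w) (hb : ∃ B, ∀ z, |w z| ≤ B) : Integrable w ρ := by
  obtain ⟨B, hB⟩ := hb
  exact (integrable_const B).mono' hw.aestronglyMeasurable
    (ae_of_all _ fun z => by simpa [Real.norm_eq_abs] using hB z)

/-- If `g = sup_n (φ_n ⊕ ψ_n)` with `φ_n, ψ_n` bounded Borel, then `π ↦ ∫∫ g dπ` is
sequentially lower semi-continuous on the couplings of `μ` and `ν` for weak* convergence. -/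
theorem stmt16 {X Y : Type*}
    [TopologicalSpace X] [PolishSpace X] [MeasurableSpace X] [BorelSpace X]
    [TopologicalSpace Y] [PolishSpace Y] [MeasurableSpace Y] [BorelSpace Y]
    (μ : Measure X) (ν : Measure Y) [IsProbabilityMeasure μ] [IsProbabilityMeasure ν]
    (g : X × Y → ENNReal) (φ : ℕ → X → ℝ) (ψ : ℕ → Y → ℝ)
    (hφ : ∀ n, Measurable (φ n)) (hψ : ∀ n, Measurable (ψ n))
    (hφb : ∀ n, ∃ B : ℝ, ∀ x, |φ n x| ≤ B) (hψb : ∀ n, ∃ B : ℝ, ∀ y, |ψ n y| ≤ B)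
    (hg : ∀ p : X × Y, (g p : EReal) = ⨆ n, ((φ n p.1 : EReal) + (ψ n p.2 : EReal)))
    (π : Measure (X × Y)) (πs : ℕ → Measure (X × Y))
    (hπ : π.map Prod.fst = μ ∧ π.map Prod.snd = ν)
    (hπs : ∀ n, (πs n).map Prod.fst = μ ∧ (πs n).map Prod.snd = ν)
    (hconv : ∀ f : BoundedContinuousFunction (X × Y) ℝ,
      Filter.Tendsto (fun n => ∫ p, f p ∂(πs n)) Filter.atTop (nhds (∫ p, f p ∂π))) :
    ∫⁻ p, g p ∂π ≤ Filter.liminf (fun n => ∫⁻ p, g p ∂(πs n)) Filter.atTop := by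
  classical
  obtain ⟨hπ1, hπ2⟩ := hπ
  haveI : NormalSpace X := by letI := TopologicalSpace.upgradeIsCompletelyMetrizable X; infer_instance
  haveI : NormalSpace Y := by letI := TopologicalSpace.upgradeIsCompletelyMetrizable Y; infer_instance
  have hprob : ∀ ρ : Measure (X × Y), ρ.map Prod.fst = μ → IsProbabilityMeasure ρ := by
    intro ρ hρ
    constructor
    have h1 : (ρ.map Prod.fst) univ = 1 := by rw [hρ]; exact measure_univ
    rwa [Measure.map_apply measurable_fst MeasurableSet.univ, preimage_univ] at h1
  haveI hPπ : IsProbabilityMeasure π := hprob π hπ1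
  have hPπs : ∀ k, IsProbabilityMeasure (πs k) := fun k => hprob _ (hπs k).1
  set f : ℕ → X × Y → ℝ := fun n p => φ n p.1 + ψ n p.2 with hfdef
  have hfmeas : ∀ n, Measurable (f n) :=
    fun n => ((hφ n).comp measurable_fst).add ((hψ n).comp measurable_snd)
  set h : ℕ → X × Y → ℝ := fun N p => (Finset.range (N + 1)).fold max 0 fun n => f n p
    with hhdef
  have hh0 : ∀ N p, 0 ≤ h N p := fun N p => (Finset.le_fold_max _).2 (Or.inl le_rfl)
  have hstep : ∀ N p, h (N + 1) p = max (f (N + 1) p) (h N p) := by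
    intro N p
    simp only [hhdef]
    rw [Finset.range_add_one, Finset.fold_insert Finset.notMem_range_self]
  have hzero : ∀ p, h 0 p = max (f 0 p) 0 := by
    intro p
    simp [hhdef, Finset.range_one, Finset.fold_singleton]
  have hhm : ∀ N, Measurable (h N) := by
    intro N
    induction N with
    | zero =>
      have : h 0 = fun p => max (f 0 p) 0 := funext hzero
      rw [this]; exact (hfmeas 0).max measurable_const
    | succ N ih =>
      have : h (N + 1) = fun p => max (f (N + 1) p) (h N p) := funext (hstep N)
      rw [this]; exact (hfmeas (N + 1)).max ih
  have hhmono : ∀ p, Monotone fun N => h N p := fun p =>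
    monotone_nat_of_le_succ fun N => by rw [hstep]; exact le_max_right _ _
  have hhbdd : ∀ N, ∃ B, ∀ p, |h N p| ≤ B := by
    intro N
    induction N with
    | zero =>
      obtain ⟨B1, hB1⟩ := hφb 0; obtain ⟨B2, hB2⟩ := hψb 0
      refine ⟨max (B1 + B2) 0, fun p => ?_⟩
      rw [hzero]
      exact abs_max_le_max_abs_abs.trans (max_le_max
        ((abs_add_le _ _).trans (add_le_add (hB1 _) (hB2 _))) (by simp))
    | succ N ih =>
      obtain ⟨B, hB⟩ := ih
      obtain ⟨B1, hB1⟩ := hφb (N + 1); obtain ⟨B2, hB2⟩ := hψb (N + 1)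
      refine ⟨max (B1 + B2) B, fun p => ?_⟩
      rw [hstep]
      exact abs_max_le_max_abs_abs.trans (max_le_max
        ((abs_add_le _ _).trans (add_le_add (hB1 _) (hB2 _))) (hB p))
  have hgpt : ∀ p, g p = ⨆ N, ENNReal.ofReal (h N p) := by
    intro p
    refine stmt16_aux_sup (g p) (fun n => f n p) ?_
    rw [hg p]
    exact iSup_congr fun n => (EReal.coe_add _ _).symm
  have hkey : ∀ ρ : Measure (X × Y), IsProbabilityMeasure ρ →
      ∫⁻ p, g p ∂ρ = ⨆ N, ENNReal.ofReal (∫ p, h N p ∂ρ) := by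
    intro ρ hρP
    haveI := hρP
    calc ∫⁻ p, g p ∂ρ = ∫⁻ p, ⨆ N, ENNReal.ofReal (h N p) ∂ρ := lintegral_congr hgpt
      _ = ⨆ N, ∫⁻ p, ENNReal.ofReal (h N p) ∂ρ :=
          lintegral_iSup (fun N => (hhm N).ennreal_ofReal)
            (fun i j hij p => ENNReal.ofReal_le_ofReal (hhmono p hij))
      _ = ⨆ N, ENNReal.ofReal (∫ p, h N p ∂ρ) :=
          iSup_congr fun N =>
            (ofReal_integral_eq_lintegral_ofReal (stmt16_aux_int ρ _ (hhm N) (hhbdd N))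
              (ae_of_all _ (hh0 N))).symm
  rw [hkey π hPπ]
  refine iSup_le fun N => ?_
  refine ENNReal.le_of_forall_pos_le_add fun ε hε _ => ?_
  have hεr : (0 : ℝ) < (ε : ℝ) := hε
  set δ : ℝ := (ε : ℝ) / (4 * (N + 1)) with hδdef
  have hδ : 0 < δ := by positivity
  have hφint : ∀ n, Integrable (φ n) μ := fun n => stmt16_aux_int μ _ (hφ n) (hφb n)
  have hψint : ∀ n, Integrable (ψ n) ν := fun n => stmt16_aux_int ν _ (hψ n) (hψb n)
  choose u hu using fun n => (hφint n).exists_boundedContinuous_integral_sub_le hδ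
  choose v hv using fun n => (hψint n).exists_boundedContinuous_integral_sub_le hδ
  set f' : ℕ → BoundedContinuousFunction (X × Y) ℝ := fun n =>
    (u n).compContinuous ⟨Prod.fst, continuous_fst⟩ +
      (v n).compContinuous ⟨Prod.snd, continuous_snd⟩ with hf'def
  haveI hco : Std.Commutative fun x y : BoundedContinuousFunction (X × Y) ℝ => x ⊔ y :=
    ⟨fun a b => sup_comm a b⟩
  haveI has : Std.Associative fun x y : BoundedContinuousFunction (X × Y) ℝ => x ⊔ y :=
    ⟨fun a b c => sup_assoc a b c⟩
  set F : BoundedContinuousFunction (X × Y) ℝ :=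
    (Finset.range (N + 1)).fold (fun x y => x ⊔ y) 0 f' with hFdef
  have hFapp : ∀ p, F p = (Finset.range (N + 1)).fold max 0 fun n => f' n p := by
    intro p
    exact (Finset.fold_hom
      (op := fun x y : BoundedContinuousFunction (X × Y) ℝ => x ⊔ y)
      (m := fun q : BoundedContinuousFunction (X × Y) ℝ => q p)
      (fun x y => by simp)).symm
  have hf'app : ∀ n p, f' n p = u n p.1 + v n p.2 := fun n p => rfl
  have hAmeas : ∀ n, Measurable fun x => |φ n x - u n x| :=
    fun n => ((hφ n).sub (u n).continuous.measurable).abs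
  have hBmeas : ∀ n, Measurable fun y => |ψ n y - v n y| :=
    fun n => ((hψ n).sub (v n).continuous.measurable).abs
  have hptw : ∀ p : X × Y, |h N p - F p| ≤
      ∑ n ∈ Finset.range (N + 1), (|φ n p.1 - u n p.1| + |ψ n p.2 - v n p.2|) := by
    intro p
    rw [hFapp p]
    refine stmt16_aux_diff _ _ _ _ (fun n _ => ?_) (fun n _ => by positivity)
    have hdiff : f n p - f' n p = (φ n p.1 - u n p.1) + (ψ n p.2 - v n p.2) := by
      rw [hf'app]; simp only [hfdef]; ring
    rw [hdiff]
    exact abs_add_le _ _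
  have hμint : ∀ n, Integrable (fun x => |φ n x - u n x|) μ :=
    fun n => ((hφint n).sub (hu n).2).abs
  have hνint : ∀ n, Integrable (fun y => |ψ n y - v n y|) ν :=
    fun n => ((hψint n).sub (hv n).2).abs
  have hcmp : ∀ ρ : Measure (X × Y), IsProbabilityMeasure ρ → ρ.map Prod.fst = μ →
      ρ.map Prod.snd = ν → |(∫ p, h N p ∂ρ) - ∫ p, F p ∂ρ| ≤ (ε : ℝ) / 2 := by
    intro ρ hρP hρ1 hρ2
    haveI := hρP
    have hA := fun n => stmt16_aux_comp ρ μ Prod.fst measurable_fst hρ1 _ (hAmeas n) (hμint n)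
    have hB := fun n => stmt16_aux_comp ρ ν Prod.snd measurable_snd hρ2 _ (hBmeas n) (hνint n)
    have hSint : Integrable
        (fun p : X × Y => ∑ n ∈ Finset.range (N + 1),
          (|φ n p.1 - u n p.1| + |ψ n p.2 - v n p.2|)) ρ :=
      integrable_finset_sum _ fun n _ => ((hA n).1.add (hB n).1)
    have hHint : Integrable (h N) ρ := stmt16_aux_int ρ _ (hhm N) (hhbdd N)
    have hFint : Integrable F ρ := F.integrable ρ
    have step1 : |(∫ p, h N p ∂ρ) - ∫ p, F p ∂ρ| ≤ ∫ p, |h N p - F p| ∂ρ := by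
      rw [← integral_sub hHint hFint]
      simpa [Real.norm_eq_abs] using norm_integral_le_integral_norm (fun p => h N p - F p) (μ := ρ)
    have step2 : ∫ p, |h N p - F p| ∂ρ ≤ ∫ p, (∑ n ∈ Finset.range (N + 1),
        (|φ n p.1 - u n p.1| + |ψ n p.2 - v n p.2|)) ∂ρ :=
      integral_mono (hHint.sub hFint).abs hSint hptw
    have step3 : ∫ p, (∑ n ∈ Finset.range (N + 1),
        (|φ n p.1 - u n p.1| + |ψ n p.2 - v n p.2|)) ∂ρ
        = ∑ n ∈ Finset.range (N + 1),
          ((∫ x, |φ n x - u n x| ∂μ) + ∫ y, |ψ n y - v n y| ∂ν) := by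
      rw [integral_finset_sum (Finset.range (N + 1))
        (f := fun n (p : X × Y) => |φ n p.1 - u n p.1| + |ψ n p.2 - v n p.2|)
        (fun n _ => (hA n).1.add (hB n).1)]
      refine Finset.sum_congr rfl fun n _ => ?_
      rw [integral_add (hA n).1 (hB n).1, (hA n).2, (hB n).2]
    have step4 : ∑ n ∈ Finset.range (N + 1),
        ((∫ x, |φ n x - u n x| ∂μ) + ∫ y, |ψ n y - v n y| ∂ν) ≤ (ε : ℝ) / 2 := by
      have hterm : ∀ n ∈ Finset.range (N + 1),
          (∫ x, |φ n x - u n x| ∂μ) + ∫ y, |ψ n y - v n y| ∂ν ≤ δ + δ := by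
        intro n _
        have h1 : ∫ x, |φ n x - u n x| ∂μ ≤ δ := by
          have := (hu n).1
          simpa [Real.norm_eq_abs] using this
        have h2 : ∫ y, |ψ n y - v n y| ∂ν ≤ δ := by
          have := (hv n).1
          simpa [Real.norm_eq_abs] using this
        linarith
      calc ∑ n ∈ Finset.range (N + 1),
          ((∫ x, |φ n x - u n x| ∂μ) + ∫ y, |ψ n y - v n y| ∂ν)
          ≤ ∑ _n ∈ Finset.range (N + 1), (δ + δ) := Finset.sum_le_sum hterm
        _ = (N + 1 : ℕ) * (δ + δ) := by
            rw [Finset.sum_const, Finset.card_range, nsmul_eq_mul]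
        _ = (ε : ℝ) / 2 := by
            rw [hδdef]
            have hN : ((N : ℝ) + 1) ≠ 0 := by positivity
            push_cast
            field_simp
            ring
    calc |(∫ p, h N p ∂ρ) - ∫ p, F p ∂ρ| ≤ ∫ p, |h N p - F p| ∂ρ := step1
      _ ≤ _ := step2
      _ = _ := step3
      _ ≤ _ := step4
  -- Final assembly
  have hπcmp := hcmp π hPπ hπ1 hπ2
  have hkcmp : ∀ k, |(∫ p, h N p ∂πs k) - ∫ p, F p ∂πs k| ≤ (ε : ℝ) / 2 :=
    fun k => hcmp _ (hPπs k) (hπs k).1 (hπs k).2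
  set c : ℝ := (ε : ℝ) / 2 with hcdef
  set w : ℕ → ENNReal := fun k => ENNReal.ofReal ((∫ p, F p ∂πs k) + c) with hwdef
  have hwle : ∀ k, w k ≤ (∫⁻ p, g p ∂πs k) + (ε : ENNReal) := by
    intro k
    haveI := hPπs k
    have h1 : (∫ p, F p ∂πs k) + c ≤ (∫ p, h N p ∂πs k) + 2 * c := by
      have := abs_le.1 (hkcmp k)
      simp only [hcdef] at *
      linarith [this.2]
    calc w k ≤ ENNReal.ofReal ((∫ p, h N p ∂πs k) + 2 * c) := ENNReal.ofReal_le_ofReal h1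
      _ ≤ ENNReal.ofReal (∫ p, h N p ∂πs k) + ENNReal.ofReal (2 * c) :=
          ENNReal.ofReal_add_le
      _ ≤ (∫⁻ p, g p ∂πs k) + (ε : ENNReal) := by
          refine add_le_add ?_ ?_
          · rw [hkey (πs k) (hPπs k)]
            exact le_iSup (fun M => ENNReal.ofReal (∫ p, h M p ∂πs k)) N
          · rw [hcdef]
            have h2 : 2 * ((ε : ℝ) / 2) = (ε : ℝ) := by ring
            rw [h2, ENNReal.ofReal_coe_nnreal]
  have hwtend : Filter.Tendsto (fun k => w k - (ε : ENNReal)) Filter.atTop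
      (nhds (ENNReal.ofReal ((∫ p, F p ∂π) + c) - (ε : ENNReal))) := by
    have h1 : Filter.Tendsto (fun k => (∫ p, F p ∂πs k) + c) Filter.atTop
        (nhds ((∫ p, F p ∂π) + c)) := (hconv F).add_const c
    have h2 : Filter.Tendsto w Filter.atTop (nhds (ENNReal.ofReal ((∫ p, F p ∂π) + c))) :=
      (ENNReal.continuous_ofReal.tendsto _).comp h1
    exact ((ENNReal.continuous_sub_right (ε : ENNReal)).tendsto _).comp h2
  have hliminf : ENNReal.ofReal ((∫ p, F p ∂π) + c) - (ε : ENNReal)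
      ≤ Filter.liminf (fun k => ∫⁻ p, g p ∂πs k) Filter.atTop := by
    rw [← hwtend.liminf_eq]
    refine Filter.liminf_le_liminf (Filter.Eventually.of_forall fun k => ?_)
    exact tsub_le_iff_right.2 ((hwle k).trans (by rw [add_comm]))
  have hfinal : ENNReal.ofReal (∫ p, h N p ∂π) ≤ ENNReal.ofReal ((∫ p, F p ∂π) + c) := by
    refine ENNReal.ofReal_le_ofReal ?_
    have := abs_le.1 hπcmp
    simp only [hcdef] at *
    linarith [this.1]
  calc ENNReal.ofReal (∫ p, h N p ∂π) ≤ ENNReal.ofReal ((∫ p, F p ∂π) + c) := hfinal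
    _ ≤ Filter.liminf (fun k => ∫⁻ p, g p ∂πs k) Filter.atTop + (ε : ENNReal) :=
        tsub_le_iff_right.1 hliminf
end

section
/- Let X = Y = [0,1] with μ = ν the Lebesgue measure, and c(x,y) = 0 if (x,y) ∈ ℚ × ℚ and c(x,y) = 1 otherwise. Then the lower semi-continuous envelope of c is identically 0, while c = 1 L-almost surely; in particular the primal value is P_c = 1 and the dual value is D_c = 1, so duality holds for c even though the l.s.c. envelope of c has primal value 0. -/
open MeasureTheory Set

open Classical in
/-- Cost which is `0` on `ℚ × ℚ` and `1` elsewhere. -/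
noncomputable def c17 : ℝ × ℝ → ENNReal := fun p =>
  if p.1 ∈ Set.range ((↑) : ℚ → ℝ) ∧ p.2 ∈ Set.range ((↑) : ℚ → ℝ) then 0 else 1

lemma ratSet_meas : MeasurableSet (Set.range ((↑) : ℚ → ℝ)) :=
  (Set.countable_range _).measurableSet

lemma muI_rat : muI (Set.range ((↑) : ℚ → ℝ)) = 0 :=
  le_antisymm (le_trans (Measure.restrict_le_self _)
    ((Set.countable_range _).measure_zero _).le) bot_le

instance : IsProbabilityMeasure muI := ⟨muI_univ⟩

lemma c17_eq_indicator :
    c17 = Set.indicator ((Set.range ((↑) : ℚ → ℝ) ×ˢ Set.range ((↑) : ℚ → ℝ))ᶜ)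
      (fun _ => (1 : ENNReal)) := by
  funext p
  by_cases h : p.1 ∈ Set.range ((↑) : ℚ → ℝ) ∧ p.2 ∈ Set.range ((↑) : ℚ → ℝ)
  · have hp : p ∉ (Set.range ((↑) : ℚ → ℝ) ×ˢ Set.range ((↑) : ℚ → ℝ))ᶜ :=
      fun hc => hc (Set.mem_prod.mpr h)
    rw [Set.indicator_of_notMem hp]; exact if_pos h
  · have hp : p ∈ (Set.range ((↑) : ℚ → ℝ) ×ˢ Set.range ((↑) : ℚ → ℝ))ᶜ :=
      fun hc => h (Set.mem_prod.mp hc)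
    rw [Set.indicator_of_mem hp]; exact if_neg h

lemma primal_value (π : Measure (ℝ × ℝ)) (hfst : π.map Prod.fst = muI) :
    ∫⁻ p, c17 p ∂π = 1 := by
  set S : Set (ℝ × ℝ) := Set.range ((↑) : ℚ → ℝ) ×ˢ Set.range ((↑) : ℚ → ℝ) with hS
  have hSm : MeasurableSet S := ratSet_meas.prod ratSet_meas
  have hS0 : π S = 0 := by
    have hsub : S ⊆ Prod.fst ⁻¹' (Set.range ((↑) : ℚ → ℝ)) := fun p hp => hp.1
    have : π (Prod.fst ⁻¹' (Set.range ((↑) : ℚ → ℝ))) = 0 := by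
      rw [← Measure.map_apply measurable_fst ratSet_meas, hfst, muI_rat]
    exact measure_mono_null hsub this
  have huniv : π Set.univ = 1 := by
    have := Measure.map_apply measurable_fst MeasurableSet.univ (μ := π) (f := Prod.fst)
    rw [hfst, muI_univ] at this
    simpa using this.symm
  rw [c17_eq_indicator, lintegral_indicator hSm.compl _, setLIntegral_one,
    measure_compl hSm (by rw [hS0]; exact ENNReal.zero_ne_top), huniv, hS0]
  simp

lemma primal_value' (π : Measure (ℝ × ℝ)) (hfst : π.map Prod.fst = muI) :
    ∫⁻ p, c17 p ∂π = 1 := primal_value π hfst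

theorem stmt17 :
    -- the lower semi-continuous envelope of `c17` is identically 0
    (∀ g : ℝ × ℝ → ENNReal, LowerSemicontinuous g → (∀ p, g p ≤ c17 p) → ∀ p, g p = 0) ∧
    -- while `c17 = 1` holds L-almost surely
    LNeg muI muI {p : ℝ × ℝ | c17 p ≠ 1} ∧
    -- the primal value is 1
    (⨅ π ∈ {π : Measure (ℝ × ℝ) | π.map Prod.fst = muI ∧ π.map Prod.snd = muI},
      ∫⁻ p, c17 p ∂π) = 1 ∧
    -- and the dual value is 1, so duality holds for `c17`
    sSup {r : EReal | ∃ φ ψ : ℝ → ℝ, Integrable φ muI ∧ Integrable ψ muI ∧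
      (∀ x ∈ Set.Icc (0:ℝ) 1, ∀ y ∈ Set.Icc (0:ℝ) 1,
        (φ x : EReal) + (ψ y : EReal) ≤ (c17 (x, y) : EReal)) ∧
      r = ((∫ x, φ x ∂muI + ∫ y, ψ y ∂muI : ℝ) : EReal)} = 1 := by
  refine ⟨?_, ?_, ?_, ?_⟩
  · -- l.s.c. envelope is 0
    intro g hg hle p
    by_contra hne
    have hpos : (0 : ENNReal) < g p := pos_iff_ne_zero.mpr hne
    have hev := hg p 0 hpos
    rw [eventually_nhds_iff] at hev
    obtain ⟨t, ht, hto, hpt⟩ := hev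
    have hd : Dense ((Set.range ((↑) : ℚ → ℝ)) ×ˢ (Set.range ((↑) : ℚ → ℝ))) :=
      Rat.denseRange_cast.prod Rat.denseRange_cast
    obtain ⟨q, hqS, hqt⟩ := hd.exists_mem_open hto ⟨p, hpt⟩
    have h0 : c17 q = 0 := by simp [c17, hqS.1, hqS.2]
    have := (ht q hqt).trans_le (hle q)
    rw [h0] at this
    exact lt_irrefl _ this
  · -- LNeg
    refine ⟨Set.range ((↑) : ℚ → ℝ), Set.range ((↑) : ℚ → ℝ), ratSet_meas, ratSet_meas,
      muI_rat, muI_rat, ?_⟩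
    intro p hp
    have : p.1 ∈ Set.range ((↑) : ℚ → ℝ) ∧ p.2 ∈ Set.range ((↑) : ℚ → ℝ) := by
      by_contra h
      exact hp (by unfold c17; exact if_neg h)
    exact Or.inl ⟨this.1, Set.mem_univ _⟩
  · -- primal
    have hmem : muI.prod muI ∈ {π : Measure (ℝ × ℝ) |
        π.map Prod.fst = muI ∧ π.map Prod.snd = muI} := by
      constructor
      · rw [Measure.map_fst_prod, muI_univ, one_smul]
      · rw [Measure.map_snd_prod, muI_univ, one_smul]
    refine le_antisymm ?_ ?_
    · exact (iInf₂_le _ hmem).trans_eq (primal_value _ hmem.1)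
    · exact le_iInf₂ fun π hπ => (primal_value π hπ.1).ge
  · -- dual
    refine le_antisymm ?_ ?_
    · -- upper bound
      refine sSup_le fun r hr => ?_
      obtain ⟨φ, ψ, hφ, hψ, hcon, hreq⟩ := hr
      have hcon' : ∀ x ∈ Set.Icc (0:ℝ) 1, ∀ y ∈ Set.Icc (0:ℝ) 1, φ x + ψ y ≤ 1 := by
        intro x hx y hy
        have h := hcon x hx y hy
        have hc : (c17 (x, y) : EReal) ≤ ((1 : ℝ) : EReal) := by
          unfold c17; split <;> simp
        have h2 := h.trans hc
        rw [← EReal.coe_add] at h2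
        exact_mod_cast h2
      have hae : ∀ᵐ x ∂muI, x ∈ Set.Icc (0:ℝ) 1 := by
        unfold muI
        exact ae_restrict_mem measurableSet_Icc
      have h1 : ∀ y ∈ Set.Icc (0:ℝ) 1, ∫ x, φ x ∂muI ≤ 1 - ψ y := by
        intro y hy
        have hmono : ∀ᵐ x ∂muI, φ x ≤ 1 - ψ y := by
          filter_upwards [hae] with x hx
          linarith [hcon' x hx y hy]
        calc ∫ x, φ x ∂muI ≤ ∫ _, (1 - ψ y) ∂muI :=
              integral_mono_ae hφ (integrable_const _) hmono
          _ = 1 - ψ y := by simp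
      have h2 : ∫ y, ψ y ∂muI ≤ 1 - ∫ x, φ x ∂muI := by
        have hmono : ∀ᵐ y ∂muI, ψ y ≤ 1 - ∫ x, φ x ∂muI := by
          filter_upwards [hae] with y hy
          linarith [h1 y hy]
        calc ∫ y, ψ y ∂muI ≤ ∫ _, (1 - ∫ x, φ x ∂muI) ∂muI :=
              integral_mono_ae hψ (integrable_const _) hmono
          _ = _ := by simp
      have hsum : ∫ x, φ x ∂muI + ∫ y, ψ y ∂muI ≤ 1 := by linarith
      rw [hreq, show (1 : EReal) = ((1 : ℝ) : EReal) by norm_cast]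
      exact_mod_cast hsum
    · -- attained
      set φ₀ : ℝ → ℝ := ((Set.range ((↑) : ℚ → ℝ))ᶜ).indicator (fun _ => (1/2 : ℝ)) with hφ₀
      have hint : Integrable φ₀ muI :=
        (integrable_const (1/2 : ℝ)).indicator ratSet_meas.compl
      have hcompl : muI ((Set.range ((↑) : ℚ → ℝ))ᶜ) = 1 := by
        rw [measure_compl ratSet_meas (by rw [muI_rat]; exact ENNReal.zero_ne_top),
          muI_univ, muI_rat]
        simp
      have hintval : ∫ x, φ₀ x ∂muI = 1/2 := by
        rw [hφ₀, integral_indicator_const _ ratSet_meas.compl, measureReal_def, hcompl]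
        simp
      refine le_sSup ⟨φ₀, φ₀, hint, hint, ?_, ?_⟩
      · intro x _ y _
        by_cases hx : x ∈ Set.range ((↑) : ℚ → ℝ) <;>
          by_cases hy : y ∈ Set.range ((↑) : ℚ → ℝ) <;>
          · simp only [hφ₀, c17, hx, hy, Set.indicator, Set.mem_compl_iff, if_true, if_false,
              if_neg, if_pos, and_self, not_true, not_false_iff]
            norm_num
            try rw [← EReal.coe_add]
            try norm_cast
            try norm_num
      · rw [hintval]
        norm_num
end

section
/- Let X = Y = [0,1] with μ = ν the Lebesgue measure. Let (q_n) enumerate the rationals in [0,1] and choose α > 0 so that D := [0,1] \ ⋃_n (q_n - α/2^n, q_n + α/2^n) has Lebesgue measure 1/2. Define c(x,y) := 1_D(x). Then P_c = D_c = 1/2, but every lower semi-continuous function g : [0,1]² → [0,∞] with g ≤ c L-almost surely satisfies g = 0 L-almost surely. In particular no modification of the rectification of c on an L-negligible set is lower semi-continuous in the original topology. -/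
open MeasureTheory Set

open Classical in
theorem stmt18 (q : ℕ → ℝ)
    (hq : Set.range q = Set.Icc (0:ℝ) 1 ∩ Set.range ((↑) : ℚ → ℝ))
    (α : ℝ) (hα : 0 < α)
    (D : Set ℝ)
    (hD : D = Set.Icc 0 1 \ ⋃ n : ℕ, Set.Ioo (q n - α / 2 ^ n) (q n + α / 2 ^ n))
    (hvol : volume D = 1 / 2)
    (c : ℝ × ℝ → ENNReal) (hc : c = fun p => if p.1 ∈ D then 1 else 0) :
    -- the primal value is 1/2
    (⨅ π ∈ {π : Measure (ℝ × ℝ) | π.map Prod.fst = muI ∧ π.map Prod.snd = muI},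
      ∫⁻ p, c p ∂π) = 1 / 2 ∧
    -- the dual value is 1/2
    sSup {r : EReal | ∃ φ ψ : ℝ → ℝ, Integrable φ muI ∧ Integrable ψ muI ∧
      (∀ x ∈ Set.Icc (0:ℝ) 1, ∀ y ∈ Set.Icc (0:ℝ) 1,
        (φ x : EReal) + (ψ y : EReal) ≤ (c (x, y) : EReal)) ∧
      r = ((∫ x, φ x ∂muI + ∫ y, ψ y ∂muI : ℝ) : EReal)} = (((1:ℝ)/2 : ℝ) : EReal) ∧
    -- but any l.s.c. function which is L-a.s. ≤ c vanishes L-almost surely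
    ∀ g : ℝ × ℝ → ENNReal, LowerSemicontinuous g →
      LNeg muI muI {p : ℝ × ℝ | ¬ g p ≤ c p} → LNeg muI muI {p : ℝ × ℝ | g p ≠ 0} := by
  haveI : IsProbabilityMeasure muI := by
    constructor
    simp [muI, Real.volume_Icc]
  have hDmeas : MeasurableSet D := by
    rw [hD]
    exact measurableSet_Icc.diff (MeasurableSet.iUnion fun n => measurableSet_Ioo)
  have hDsub : D ⊆ Set.Icc 0 1 := by rw [hD]; exact diff_subset
  have hmuD : muI D = 1 / 2 := by
    rw [muI, Measure.restrict_apply hDmeas, inter_eq_self_of_subset_left hDsub, hvol]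
  have hmuDtoReal : (muI D).toReal = 1 / 2 := by
    rw [hmuD]; simp
  refine ⟨?_, ?_, ?_⟩
  · -- primal
    have hval : ∀ π ∈ {π : Measure (ℝ × ℝ) | π.map Prod.fst = muI ∧ π.map Prod.snd = muI},
        ∫⁻ p, c p ∂π = 1 / 2 := by
      intro π hπ
      have hceq : ∀ p : ℝ × ℝ, c p = (Prod.fst ⁻¹' D).indicator (fun _ => (1:ENNReal)) p := by
        intro p; simp [hc, Set.indicator_apply, Set.mem_preimage]
      calc ∫⁻ p, c p ∂π = ∫⁻ p, (Prod.fst ⁻¹' D).indicator (fun _ => (1:ENNReal)) p ∂π := by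
            simp_rw [hceq]
        _ = 1 * π (Prod.fst ⁻¹' D) := lintegral_indicator_const (hDmeas.preimage measurable_fst) 1
        _ = (π.map Prod.fst) D := by rw [one_mul, Measure.map_apply measurable_fst hDmeas]
        _ = 1 / 2 := by rw [hπ.1, hmuD]
    have hmem : muI.map (fun x => (x, x)) ∈
        {π : Measure (ℝ × ℝ) | π.map Prod.fst = muI ∧ π.map Prod.snd = muI} := by
      have hm : Measurable fun x : ℝ => (x, x) := measurable_id.prodMk measurable_id
      constructor
      · rw [Measure.map_map measurable_fst hm]
        have h1 : (Prod.fst ∘ fun x : ℝ => (x, x)) = id := rfl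
        rw [h1, Measure.map_id]
      · rw [Measure.map_map measurable_snd hm]
        have h1 : (Prod.snd ∘ fun x : ℝ => (x, x)) = id := rfl
        rw [h1, Measure.map_id]
    refine le_antisymm ((iInf₂_le _ hmem).trans_eq (hval _ hmem)) (le_iInf₂ fun π hπ => (hval π hπ).ge)
  · -- dual
    set cR : ℝ → ℝ := fun x => if x ∈ D then 1 else 0 with hcR
    have hcRind : cR = D.indicator (fun _ => (1:ℝ)) := by
      funext x; simp [hcR, Set.indicator_apply]
    have hcRint : Integrable cR muI := by
      rw [hcRind]; exact (integrable_const (1:ℝ)).indicator hDmeas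
    have hcRval : ∫ x, cR x ∂muI = 1 / 2 := by
      rw [hcRind, integral_indicator_const (1:ℝ) hDmeas, measureReal_def, hmuDtoReal, smul_eq_mul, mul_one]
    have hceR : ∀ x y : ℝ, (c (x, y) : EReal) = ((cR x : ℝ) : EReal) := by
      intro x y
      simp only [hc, hcR]
      split_ifs <;> simp
    apply le_antisymm
    · apply sSup_le
      rintro r ⟨φ, ψ, hφ, hψ, hcon, rfl⟩
      rw [EReal.coe_le_coe_iff]
      set B := ∫ y, ψ y ∂muI with hB
      have hae : ∀ᵐ x ∂muI, φ x + B ≤ cR x := by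
        have hmem : ∀ᵐ x ∂muI, x ∈ Set.Icc (0:ℝ) 1 := by
          rw [muI]; exact ae_restrict_mem measurableSet_Icc
        filter_upwards [hmem] with x hx
        have hBle : B ≤ cR x - φ x := by
          have : ∀ᵐ y ∂muI, ψ y ≤ cR x - φ x := by
            have hmem' : ∀ᵐ y ∂muI, y ∈ Set.Icc (0:ℝ) 1 := by
              rw [muI]; exact ae_restrict_mem measurableSet_Icc
            filter_upwards [hmem'] with y hy
            have := hcon x hx y hy
            rw [hceR x y, ← EReal.coe_add, EReal.coe_le_coe_iff] at this
            linarith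
          calc B ≤ ∫ _, (cR x - φ x) ∂muI := integral_mono_ae hψ (integrable_const _) this
            _ = cR x - φ x := by simp
        linarith
      have h2 : ∫ x, (φ x + B) ∂muI ≤ ∫ x, cR x ∂muI :=
        integral_mono_ae (hφ.add (integrable_const B)) hcRint hae
      rw [integral_add hφ (integrable_const B), integral_const, hcRval] at h2
      simp only [measureReal_def, measure_univ, ENNReal.toReal_one, smul_eq_mul, one_mul] at h2
      linarith
    · apply le_sSup
      refine ⟨cR, fun _ => 0, hcRint, integrable_const 0, ?_, ?_⟩
      · intro x hx y hy
        rw [hceR x y]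
        simp
      · rw [hcRval, integral_const]
        simp
  · -- third part
    rintro g hg ⟨M, N, hM, hN, hμM, hνN, hsub⟩
    have hμM' : volume (M ∩ Set.Icc 0 1) = 0 := by
      rwa [muI, Measure.restrict_apply hM] at hμM
    have hνN' : volume (N ∩ Set.Icc 0 1) = 0 := by
      rwa [muI, Measure.restrict_apply hN] at hνN
    refine ⟨(M ∩ Set.Icc 0 1) ∪ (Set.Icc 0 1)ᶜ, (N ∩ Set.Icc 0 1) ∪ (Set.Icc 0 1)ᶜ,
      (hM.inter measurableSet_Icc).union measurableSet_Icc.compl,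
      (hN.inter measurableSet_Icc).union measurableSet_Icc.compl, ?_, ?_, ?_⟩
    · rw [muI, Measure.restrict_apply (((hM.inter measurableSet_Icc).union measurableSet_Icc.compl))]
      refine measure_mono_null ?_ hμM'
      intro x hx
      rcases hx.1 with h | h
      · exact ⟨h.1, hx.2⟩
      · exact absurd hx.2 h
    · rw [muI, Measure.restrict_apply (((hN.inter measurableSet_Icc).union measurableSet_Icc.compl))]
      refine measure_mono_null ?_ hνN'
      intro x hx
      rcases hx.1 with h | h
      · exact ⟨h.1, hx.2⟩
      · exact absurd hx.2 h
    · rintro ⟨x, y⟩ hp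
      simp only [mem_setOf_eq] at hp
      by_contra hmem
      simp only [Set.mem_union, Set.mem_prod, Set.mem_univ, and_true, true_and,
        Set.mem_union, Set.mem_inter_iff, Set.mem_compl_iff, not_or, not_and] at hmem
      obtain ⟨⟨hxMI, hxI⟩, ⟨hyNI, hyI⟩⟩ := hmem
      rw [not_not] at hxI hyI
      have hxM : x ∉ M := fun h => hxMI h hxI
      have hyN : y ∉ N := fun h => hyNI h hyI
      -- g (x,y) > 0; use LSC
      have hpos : (0 : ENNReal) < g (x, y) := pos_iff_ne_zero.mpr hp
      have hev := hg (x, y) 0 hpos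
      rw [eventually_nhds_iff] at hev
      obtain ⟨U, hU, hUopen, hxyU⟩ := hev
      obtain ⟨u, v, huo, hvo, hxu, hyv, huv⟩ := isOpen_prod_iff.mp hUopen x y hxyU
      -- find y' ∈ v ∩ Ioo 0 1 \ N
      have hclos : ∀ (w : Set ℝ) (t : ℝ), IsOpen w → t ∈ w → t ∈ Set.Icc (0:ℝ) 1 →
          (w ∩ Set.Ioo (0:ℝ) 1).Nonempty := by
        intro w t hwo htw htI
        have : t ∈ closure (Set.Ioo (0:ℝ) 1) := by
          rw [closure_Ioo (by norm_num : (0:ℝ) ≠ 1)]; exact htI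
        exact mem_closure_iff.mp this w hwo htw
      have hyNE : ((v ∩ Set.Ioo (0:ℝ) 1) \ N).Nonempty := by
        by_contra h
        rw [Set.not_nonempty_iff_eq_empty, diff_eq_empty] at h
        have hpos' : 0 < volume (v ∩ Set.Ioo (0:ℝ) 1) :=
          (hvo.inter isOpen_Ioo).measure_pos volume (hclos v y hvo hyv hyI)
        have : volume (v ∩ Set.Ioo (0:ℝ) 1) = 0 := by
          refine measure_mono_null (fun z hz => ?_) hνN'
          exact ⟨h hz, Ioo_subset_Icc_self hz.2⟩
        exact hpos'.ne' this
      obtain ⟨y', hy'v, hy'N⟩ := hyNE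
      -- find x' ∈ u ∩ Ioo 0 1, x' ∉ D, x' ∉ M
      have huNE : (u ∩ Set.Ioo (0:ℝ) 1).Nonempty := hclos u x huo hxu hxI
      obtain ⟨r0, hr0⟩ := Rat.denseRange_cast.exists_mem_open (huo.inter isOpen_Ioo) huNE
      have hr0mem : (r0 : ℝ) ∈ Set.range q := by
        rw [hq]
        exact ⟨Ioo_subset_Icc_self hr0.2, ⟨r0, rfl⟩⟩
      obtain ⟨n, hn⟩ := hr0mem
      set W := u ∩ Set.Ioo (0:ℝ) 1 ∩ Set.Ioo (q n - α / 2 ^ n) (q n + α / 2 ^ n) with hW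
      have hWopen : IsOpen W := (huo.inter isOpen_Ioo).inter isOpen_Ioo
      have hWne : W.Nonempty := by
        refine ⟨(r0 : ℝ), hr0, ?_⟩
        have hpow : 0 < α / 2 ^ n := div_pos hα (by positivity)
        rw [hn]
        constructor <;> linarith
      have hWD : W ⊆ Dᶜ := by
        intro z hz
        rw [hD]
        intro hzD
        exact hzD.2 (Set.mem_iUnion.mpr ⟨n, hz.2⟩)
      have hxNE : (W \ M).Nonempty := by
        by_contra h
        rw [Set.not_nonempty_iff_eq_empty, diff_eq_empty] at h
        have hpos' : 0 < volume W := hWopen.measure_pos volume hWne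
        have : volume W = 0 := by
          refine measure_mono_null (fun z hz => ?_) hμM'
          exact ⟨h hz, Ioo_subset_Icc_self hz.1.2⟩
        exact hpos'.ne' this
      obtain ⟨x', hx'W, hx'M⟩ := hxNE
      -- contradiction
      have hgle : g (x', y') ≤ c (x', y') := by
        by_contra hgc
        have := hsub hgc
        rcases this with h | h
        · exact hx'M h.1
        · exact hy'N h.2
      have hc0 : c (x', y') = 0 := by
        rw [hc]
        simp only
        rw [if_neg (hWD hx'W)]
      have : 0 < g (x', y') := hU (x', y') (huv ⟨hx'W.1.1, hy'v.1⟩)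
      rw [hc0] at hgle
      exact (this.ne' (le_antisymm hgle zero_le))
end
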